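/- arXiv:1709.04048 — 3 statements merged into one kernel-verified Lean document; each statement's English description precedes it below -/
import Mathlib

section
/- For any fixed input stream, any item x with n_x(t) > 0, and any time t with P(Z_x(t) = 1) < 1, the Unbiased Space Saving estimate is biased upward conditional on inclusion: E[N̂_x(t) | Z_x(t) = 1] = n_x(t) / P(Z_x(t) = 1) > n_x(t), where Z_x(t) is the indicator that x is a label in the sketch after t elements. -/
open MeasureTheory ProbabilityTheory Filter

/-- The state of a Space Saving sketch with `m` bins: each bin holds an
optional label (`none` = no label yet) and a count. -/
abbrev SSState (m : ℕ) := Fin m → Option ℕ × ℕ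

/-- Initial state: all bins unlabeled with count 0. -/
def initState (m : ℕ) : SSState m := fun _ => (none, 0)

/-- The minimal bin count `N̂_min` (0 when `m = 0`). -/
noncomputable def minCount {m : ℕ} (s : SSState m) : ℕ := ⨅ j, (s j).2

/-- The maximal bin count `N̂_max` (0 when `m = 0`). -/
noncomputable def maxCount {m : ℕ} (s : SSState m) : ℕ := ⨆ j, (s j).2

/-- Select a bin of minimal count using the tie-breaking randomness `v`:
among the `k` bins of minimal count (sorted by index), the one of rank
`⌊v * k⌋` (clamped) is chosen; this is a uniformly random choice among the
tied bins when `v` is uniform on `[0,1)`.  Returns `none` iff `m = 0`. -/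
noncomputable def pickMin {m : ℕ} (s : SSState m) (v : ℝ) : Option (Fin m) :=
  let l := (Finset.univ.filter fun j => ∀ k, (s j).2 ≤ (s k).2).sort (· ≤ ·)
  l[min (⌊v * l.length⌋.toNat) (l.length - 1)]?

/-- One step of the (Unbiased) Space Saving update upon arrival of item `x`,
with label-replacement randomness `u` and tie-breaking randomness `v`.
If `x` is a label of the sketch, its bin's count is incremented; otherwise a
minimal bin (count `N̂_min`) is selected, its count is incremented, and its
label is replaced by `x` iff `u < 1/(N̂_min + 1)` (so a uniform `u` on `[0,1)`
replaces the label with probability `1/(N̂_min+1)`; taking `u = 0` makes the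
replacement always happen, which is the Deterministic Space Saving update). -/
noncomputable def ssUpdate {m : ℕ} (x : ℕ) (u v : ℝ) (s : SSState m) : SSState m :=
  if ∃ j, (s j).1 = some x then
    fun j => if (s j).1 = some x then (some x, (s j).2 + 1) else s j
  else
    match pickMin s v with
    | none => s
    | some j₀ =>
        Function.update s j₀
          ((if u < 1 / (((s j₀).2 : ℝ) + 1) then some x else (s j₀).1), (s j₀).2 + 1)

/-- The sketch state after `t` stream elements, where the `r`-th element
(0-indexed) is `x r`, with randomness sequences `u` (label replacement)
and `v` (tie breaking). -/
noncomputable def ssRun (m : ℕ) (x : ℕ → ℕ) (u v : ℕ → ℝ) : ℕ → SSState m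
  | 0 => initState m
  | t + 1 => ssUpdate (x t) (u t) (v t) (ssRun m x u v t)

/-- Estimated count `N̂_i` of item `i`: the count of the bin labeled `i`,
or `0` if no bin is labeled `i`. -/
def ssEst {m : ℕ} (s : SSState m) (i : ℕ) : ℕ :=
  ∑ j, if (s j).1 = some i then (s j).2 else 0

/-- `Z_i = 1`: item `i` is one of the labels of the sketch. -/
def isLabel {m : ℕ} (s : SSState m) (i : ℕ) : Prop := ∃ j, (s j).1 = some i

/-- True count `n_i(t)` of item `i` among the first `t` stream elements. -/
def trueCount (x : ℕ → ℕ) (i t : ℕ) : ℕ :=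
  ((Finset.range t).filter fun r => x r = i).card

/-- The uniform distribution on `[0,1)`. -/
noncomputable def unif01 : Measure ℝ := volume.restrict (Set.Ico (0:ℝ) 1)

/-- The law on `ℕ` of a discrete item distribution with probabilities `p`. -/
noncomputable def itemLaw (p : ℕ → ℝ) : Measure ℕ :=
  Measure.sum fun i => ENNReal.ofReal (p i) • Measure.dirac i


/-! ### Auxiliary development -/

instance {α : Type*} : MeasurableSpace (Option α) := ⊤
instance {α : Type*} : DiscreteMeasurableSpace (Option α) := ⟨fun _ => trivial⟩

instance : IsProbabilityMeasure unif01 := ⟨by simp [unif01, Real.volume_Ico]⟩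

/-- Distinct-labels invariant. -/
def UInv {m : ℕ} (s : SSState m) : Prop :=
  ∀ j k y, (s j).1 = some y → (s k).1 = some y → j = k

section Aux

variable {m : ℕ}

lemma uss_pickMin_some (hm : 0 < m) (s : SSState m) (v : ℝ) :
    ∃ j₀, pickMin s v = some j₀ := by
  classical
  obtain ⟨j, -, hj⟩ := Finset.exists_min_image Finset.univ (fun j : Fin m => (s j).2)
    ⟨⟨0, hm⟩, Finset.mem_univ _⟩
  set l := (Finset.univ.filter fun j : Fin m => ∀ k, (s j).2 ≤ (s k).2).sort (· ≤ ·) with hl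
  have hmem : j ∈ l := by
    rw [hl, Finset.mem_sort]
    simp only [Finset.mem_filter, Finset.mem_univ, true_and]
    exact fun k => hj k (Finset.mem_univ k)
  have hlen : 0 < l.length := List.length_pos_iff.mpr (List.ne_nil_of_mem hmem)
  have hidx : min (⌊v * l.length⌋.toNat) (l.length - 1) < l.length :=
    lt_of_le_of_lt (min_le_right _ _) (Nat.sub_lt hlen one_pos)
  exact ⟨l.get ⟨_, hidx⟩, List.getElem?_eq_getElem hidx⟩

lemma uss_update_of_mem (x : ℕ) (u v : ℝ) (s : SSState m) (h : ∃ j, (s j).1 = some x) :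
    ssUpdate x u v s = fun j => if (s j).1 = some x then (some x, (s j).2 + 1) else s j := by
  simp only [ssUpdate, if_pos h]

lemma uss_update_of_not (x : ℕ) (u v : ℝ) (s : SSState m) (h : ¬∃ j, (s j).1 = some x)
    {j₀ : Fin m} (hp : pickMin s v = some j₀) :
    ssUpdate x u v s = Function.update s j₀
      ((if u < 1 / (((s j₀).2 : ℝ) + 1) then some x else (s j₀).1), (s j₀).2 + 1) := by
  simp only [ssUpdate, if_neg h, hp]

lemma uss_inv_update (x : ℕ) (u v : ℝ) (s : SSState m) (hs : UInv s) :
    UInv (ssUpdate x u v s) := by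
  classical
  by_cases h : ∃ j, (s j).1 = some x
  · rw [uss_update_of_mem x u v s h]
    intro j k y hj hk
    have key : ∀ i : Fin m,
        ((if (s i).1 = some x then ((some x : Option ℕ), (s i).2 + 1) else s i) : Option ℕ × ℕ).1
          = some y → (s i).1 = some y := by
      intro i hi
      by_cases hi' : (s i).1 = some x
      · rw [if_pos hi'] at hi
        rw [hi']
        exact hi
      · rwa [if_neg hi'] at hi
    exact hs j k y (key j hj) (key k hk)
  · rcases hp : pickMin s v with _ | j₀
    · simp only [ssUpdate, if_neg h, hp]
      exact hs
    · rw [uss_update_of_not x u v s h hp]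
      by_cases hu : u < 1 / (((s j₀).2 : ℝ) + 1)
      · intro j k y hj hk
        by_cases hjj : j = j₀ <;> by_cases hkk : k = j₀
        · rw [hjj, hkk]
        · subst hjj
          rw [Function.update_self] at hj
          rw [Function.update_of_ne hkk] at hk
          have hxy : some x = some y := by rw [if_pos hu] at hj; exact hj
          exact absurd ⟨k, hk.trans hxy.symm⟩ h
        · subst hkk
          rw [Function.update_self] at hk
          rw [Function.update_of_ne hjj] at hj
          have hxy : some x = some y := by rw [if_pos hu] at hk; exact hk
          exact absurd ⟨j, hj.trans hxy.symm⟩ h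
        · rw [Function.update_of_ne hjj] at hj
          rw [Function.update_of_ne hkk] at hk
          exact hs j k y hj hk
      · have hlab : ∀ i, ((Function.update s j₀
            ((if u < 1 / (((s j₀).2 : ℝ) + 1) then some x else (s j₀).1), (s j₀).2 + 1)) i).1
            = (s i).1 := by
          intro i
          by_cases hii : i = j₀
          · subst hii; rw [Function.update_self, if_neg hu]
          · rw [Function.update_of_ne hii]
        intro j k y hj hk
        rw [hlab] at hj hk
        exact hs j k y hj hk

lemma uss_inv_run (x : ℕ → ℕ) (u v : ℕ → ℝ) (t : ℕ) : UInv (ssRun m x u v t) := by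
  induction t with
  | zero => intro j k y hj _; simp [ssRun, initState] at hj
  | succ t ih => exact uss_inv_update _ _ _ _ ih

lemma uss_count_update_le (x : ℕ) (u v : ℝ) (s : SSState m) (j : Fin m) :
    ((ssUpdate x u v s) j).2 ≤ (s j).2 + 1 := by
  classical
  by_cases h : ∃ j, (s j).1 = some x
  · rw [uss_update_of_mem x u v s h]
    by_cases hj : (s j).1 = some x <;> simp [hj]
  · rcases hp : pickMin s v with _ | j₀
    · simp only [ssUpdate, if_neg h, hp]; omega
    · rw [uss_update_of_not x u v s h hp]
      by_cases hjj : j = j₀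
      · subst hjj; rw [Function.update_self]
      · rw [Function.update_of_ne hjj]; omega

lemma uss_le_maxCount (s : SSState m) (j : Fin m) : (s j).2 ≤ maxCount s := by
  rw [maxCount]
  exact le_ciSup (Set.Finite.bddAbove (Set.finite_range fun k => (s k).2)) j

lemma uss_maxCount_le (hm : 0 < m) (s : SSState m) {n : ℕ} (h : ∀ j, (s j).2 ≤ n) :
    maxCount s ≤ n := by
  haveI : Nonempty (Fin m) := ⟨⟨0, hm⟩⟩
  rw [maxCount]
  exact ciSup_le h

lemma uss_maxCount_update_le (hm : 0 < m) (x : ℕ) (u v : ℝ) (s : SSState m) :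
    maxCount (ssUpdate x u v s) ≤ maxCount s + 1 := by
  refine uss_maxCount_le hm _ fun j => le_trans (uss_count_update_le x u v s j) ?_
  have := uss_le_maxCount s j
  omega

lemma uss_maxCount_run_le (hm : 0 < m) (x : ℕ → ℕ) (u v : ℕ → ℝ) (t : ℕ) :
    maxCount (ssRun m x u v t) ≤ t := by
  induction t with
  | zero => exact uss_maxCount_le hm _ fun j => Nat.le_refl 0
  | succ t ih =>
      refine le_trans (uss_maxCount_update_le hm _ _ _ _) ?_
      omega

lemma uss_ssEst_le (s : SSState m) (a : ℕ) : ssEst s a ≤ m * maxCount s := by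
  have h : ∀ j ∈ Finset.univ, (if (s j).1 = some a then (s j).2 else 0) ≤ maxCount s := by
    intro j _
    by_cases hj : (s j).1 = some a
    · rw [if_pos hj]; exact uss_le_maxCount s j
    · rw [if_neg hj]; exact Nat.zero_le _
  calc ssEst s a ≤ Finset.univ.card • maxCount s := Finset.sum_le_card_nsmul _ _ _ h
  _ = m * maxCount s := by simp [Finset.card_univ, smul_eq_mul]

lemma ssRun_congr (x : ℕ → ℕ) {u v u' v' : ℕ → ℝ} {t : ℕ}
    (h : ∀ r < t, u r = u' r) (h' : ∀ r < t, v r = v' r) :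
    ssRun m x u v t = ssRun m x u' v' t := by
  induction t with
  | zero => rfl
  | succ t ih =>
      simp only [ssRun]
      rw [ih (fun r hr => h r (hr.trans (Nat.lt_succ_self t)))
          (fun r hr => h' r (hr.trans (Nat.lt_succ_self t))),
        h t (Nat.lt_succ_self t), h' t (Nat.lt_succ_self t)]

/-! measurability -/

lemma uss_measurable_pickMin (s : SSState m) : Measurable (pickMin s) := by
  have h : pickMin s = (fun n : ℤ =>
      (let l := (Finset.univ.filter fun j : Fin m => ∀ k, (s j).2 ≤ (s k).2).sort (· ≤ ·)
       l[min n.toNat (l.length - 1)]?)) ∘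
      (fun v : ℝ => ⌊v * ((Finset.univ.filter fun j : Fin m =>
        ∀ k, (s j).2 ≤ (s k).2).sort (· ≤ ·)).length⌋) := rfl
  rw [h]
  exact (measurable_of_countable _).comp ((measurable_id.mul_const _).floor)

lemma uss_measurable_update (x : ℕ) (s : SSState m) :
    Measurable fun p : ℝ × ℝ => ssUpdate x p.1 p.2 s := by
  classical
  by_cases h : ∃ j, (s j).1 = some x
  · simp only [ssUpdate, if_pos h]; exact measurable_const
  · simp only [ssUpdate, if_neg h]
    have h2 : Measurable fun q : ℝ × Option (Fin m) =>
        (match q.2 with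
        | none => s
        | some j₀ => Function.update s j₀
            ((if q.1 < 1 / (((s j₀).2 : ℝ) + 1) then some x else (s j₀).1), (s j₀).2 + 1)) := by
      apply measurable_from_prod_countable_left
      intro o
      cases o with
      | none => exact measurable_const
      | some j₀ =>
          have e : ∀ u : ℝ, Function.update s j₀
              ((if u < 1 / (((s j₀).2 : ℝ) + 1) then some x else (s j₀).1), (s j₀).2 + 1)
              = if u < 1 / (((s j₀).2 : ℝ) + 1) then
                  Function.update s j₀ (some x, (s j₀).2 + 1)
                else Function.update s j₀ ((s j₀).1, (s j₀).2 + 1) := by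
            intro u
            by_cases hu : u < 1 / (((s j₀).2 : ℝ) + 1)
            · rw [if_pos hu, if_pos hu]
            · rw [if_neg hu, if_neg hu]
          simp only [e]
          exact Measurable.ite measurableSet_Iio measurable_const measurable_const
    exact h2.comp (measurable_fst.prodMk ((uss_measurable_pickMin s).comp measurable_snd))

lemma uss_measurable_update_pair (x : ℕ) :
    Measurable fun q : (ℝ × ℝ) × SSState m => ssUpdate x q.1.1 q.1.2 q.2 :=
  measurable_from_prod_countable_left fun s => uss_measurable_update x s

noncomputable def ssRunV (m : ℕ) (x : ℕ → ℕ) (t : ℕ) (w : ℕ → ℝ × ℝ) : SSState m :=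
  ssRun m x (fun r => (w r).1) (fun r => (w r).2) t

lemma uss_measurable_ssRunV (m : ℕ) (x : ℕ → ℕ) (t : ℕ) : Measurable (ssRunV m x t) := by
  induction t with
  | zero => exact measurable_const
  | succ t ih =>
      have h : ssRunV m x (t + 1)
          = fun w => ssUpdate (x t) (w t).1 (w t).2 (ssRunV m x t w) := rfl
      rw [h]
      exact (uss_measurable_update_pair (x t)).comp ((measurable_pi_apply t).prodMk ih)

lemma uss_measurable_run {Ω : Type*} [MeasurableSpace Ω] (U V : ℕ → Ω → ℝ)
    (hmeas : ∀ t, Measurable fun ω => (U t ω, V t ω)) (m : ℕ) (x : ℕ → ℕ) (t : ℕ) :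
    Measurable fun ω => ssRun m x (fun r => U r ω) (fun r => V r ω) t := by
  induction t with
  | zero => exact measurable_const
  | succ t ih =>
      exact (uss_measurable_update_pair (x t)).comp ((hmeas t).prodMk ih)

/-! integrals over `unif01` -/

lemma uss_integrable_ite (r b1 b2 : ℝ) :
    Integrable (fun u : ℝ => if u < r then b1 else b2) unif01 := by
  refine Integrable.mono' (integrable_const (|b1| + |b2|))
    ((Measurable.ite measurableSet_Iio measurable_const
      measurable_const).aestronglyMeasurable) (ae_of_all _ fun u => ?_)
  by_cases hu : u < r
  · simp only [if_pos hu, Real.norm_eq_abs]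
    exact le_add_of_nonneg_right (abs_nonneg _)
  · simp only [if_neg hu, Real.norm_eq_abs]
    exact le_add_of_nonneg_left (abs_nonneg _)

lemma uss_integral_if_lt (c r : ℝ) (h0 : 0 ≤ r) (h1 : r ≤ 1) :
    ∫ u, (if u < r then c else 0) ∂unif01 = c * r := by
  have h : (fun u : ℝ => if u < r then c else 0) = (Set.Iio r).indicator fun _ => c := by
    ext u; simp [Set.indicator_apply]
  rw [h, unif01, integral_indicator measurableSet_Iio,
    Measure.restrict_restrict measurableSet_Iio, setIntegral_const, smul_eq_mul]
  have h2 : Set.Iio r ∩ Set.Ico (0 : ℝ) 1 = Set.Ico 0 r := by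
    ext u
    simp only [Set.mem_inter_iff, Set.mem_Iio, Set.mem_Ico]
    exact ⟨fun ⟨h, h2, _⟩ => ⟨h2, h⟩, fun ⟨h2, h⟩ => ⟨h, h2, lt_of_lt_of_le h h1⟩⟩
  rw [h2, measureReal_def, Real.volume_Ico, mul_comm]
  rw [show r - 0 = r by ring, ENNReal.toReal_ofReal h0]

lemma uss_integral_if_ge (c r : ℝ) (h0 : 0 ≤ r) (h1 : r ≤ 1) :
    ∫ u, (if u < r then 0 else c) ∂unif01 = c * (1 - r) := by
  have h : (fun u : ℝ => if u < r then 0 else c) = (Set.Ici r).indicator fun _ => c := by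
    ext u
    by_cases hu : u < r
    · simp [Set.indicator_apply, hu, not_le.mpr hu]
    · simp [Set.indicator_apply, hu, not_lt.mp hu]
  rw [h, unif01, integral_indicator measurableSet_Ici,
    Measure.restrict_restrict measurableSet_Ici, setIntegral_const, smul_eq_mul]
  have h2 : Set.Ici r ∩ Set.Ico (0 : ℝ) 1 = Set.Ico r 1 := by
    ext u
    simp only [Set.mem_inter_iff, Set.mem_Ici, Set.mem_Ico]
    exact ⟨fun ⟨h, _, h3⟩ => ⟨h, h3⟩, fun ⟨h, h3⟩ => ⟨h, le_trans h0 h, h3⟩⟩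
  rw [h2, measureReal_def, Real.volume_Ico, mul_comm, ENNReal.toReal_ofReal (by linarith)]

lemma uss_integral_ite (r b1 b2 : ℝ) (h0 : 0 ≤ r) (h1 : r ≤ 1) :
    ∫ u, (if u < r then b1 else b2) ∂unif01 = b1 * r + b2 * (1 - r) := by
  have h : (fun u : ℝ => if u < r then b1 else b2)
      = fun u => (if u < r then b1 else 0) + (if u < r then 0 else b2) := by
    ext u; by_cases hu : u < r <;> simp [hu]
  have i1 : Integrable (fun u : ℝ => if u < r then b1 else 0) unif01 :=
    uss_integrable_ite r b1 0
  have i2 : Integrable (fun u : ℝ => if u < r then 0 else b2) unif01 :=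
    uss_integrable_ite r 0 b2
  rw [h, integral_add i1 i2, uss_integral_if_lt b1 r h0 h1, uss_integral_if_ge b2 r h0 h1]

/-! the key one-step computation -/

lemma uss_key (hm : 0 < m) (x a : ℕ) (s : SSState m) (hs : UInv s) (v : ℝ) :
    ∫ u, (ssEst (ssUpdate x u v s) a : ℝ) ∂unif01
      = (ssEst s a : ℝ) + (if x = a then 1 else 0) := by
  classical
  by_cases h : ∃ j, (s j).1 = some x
  · by_cases hxa : x = a
    · subst hxa
      obtain ⟨j₁, hj₁⟩ := h
      have hterm : ∀ j : Fin m,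
          (if ((if (s j).1 = some x then ((some x : Option ℕ), (s j).2 + 1) else s j)
              : Option ℕ × ℕ).1 = some x then
            ((if (s j).1 = some x then ((some x : Option ℕ), (s j).2 + 1) else s j)
              : Option ℕ × ℕ).2 else 0)
          = (if (s j).1 = some x then (s j).2 else 0) + (if j = j₁ then 1 else 0) := by
        intro j
        by_cases hj : (s j).1 = some x
        · have e : j = j₁ := hs j j₁ x hj hj₁
          subst e; simp [hj]
        · have e : j ≠ j₁ := fun hjj => hj (hjj ▸ hj₁)
          simp [hj, e]
      have hest : ∀ u : ℝ, ssEst (ssUpdate x u v s) x = ssEst s x + 1 := by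
        intro u
        rw [uss_update_of_mem x u v s ⟨j₁, hj₁⟩]
        simp only [ssEst]
        rw [Finset.sum_congr rfl fun j _ => hterm j, Finset.sum_add_distrib]
        simp
      have hconst : (fun u : ℝ => (ssEst (ssUpdate x u v s) x : ℝ))
          = fun _ : ℝ => ((ssEst s x : ℝ) + 1) := by
        funext u; rw [hest u]; push_cast; ring
      rw [hconst, integral_const]
      simp
    · have hest : ∀ u : ℝ, ssEst (ssUpdate x u v s) a = ssEst s a := by
        intro u
        rw [uss_update_of_mem x u v s h]
        simp only [ssEst]
        apply Finset.sum_congr rfl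
        intro j _
        by_cases hj : (s j).1 = some x
        · have hne : ¬ ((some x : Option ℕ) = some a) := by simp [hxa]
          simp [hj, hne]
        · simp [hj]
      have hconst : (fun u : ℝ => (ssEst (ssUpdate x u v s) a : ℝ))
          = fun _ : ℝ => (ssEst s a : ℝ) := by funext u; rw [hest u]
      rw [hconst, integral_const]
      simp [hxa]
  · obtain ⟨j₀, hp⟩ := uss_pickMin_some hm s v
    set c : ℕ := (s j₀).2 with hc
    set r : ℝ := 1 / ((c : ℝ) + 1) with hr
    have hc0 : (0 : ℝ) < (c : ℝ) + 1 := by positivity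
    have hr0 : (0 : ℝ) ≤ r := by positivity
    have hr1 : r ≤ 1 := by
      rw [hr, div_le_one hc0]
      have : (0 : ℝ) ≤ (c : ℝ) := Nat.cast_nonneg c
      linarith
    set B : ℕ := ∑ j ∈ Finset.univ.erase j₀, (if (s j).1 = some a then (s j).2 else 0) with hB
    have hsplit : ssEst s a = B + (if (s j₀).1 = some a then c else 0) := by
      rw [ssEst, ← Finset.sum_erase_add Finset.univ _ (Finset.mem_univ j₀)]
    have hpt : ∀ u : ℝ, ssEst (ssUpdate x u v s) a
        = B + (if (if u < r then some x else (s j₀).1) = some a then c + 1 else 0) := by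
      intro u
      rw [uss_update_of_not x u v s h hp, ssEst,
        ← Finset.sum_erase_add Finset.univ _ (Finset.mem_univ j₀)]
      congr 1
      · apply Finset.sum_congr rfl
        intro j hj
        rw [Function.update_of_ne (Finset.ne_of_mem_erase hj)]
      · rw [Function.update_self]
    by_cases hxa : x = a
    · have hl0 : (s j₀).1 ≠ some a := fun e => h ⟨j₀, by rw [e, hxa]⟩
      have hpt' : ∀ u : ℝ, (ssEst (ssUpdate x u v s) a : ℝ)
          = (B : ℝ) + (if u < r then ((c : ℝ) + 1) else 0) := by
        intro u
        rw [hpt u]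
        by_cases hu : u < r
        · rw [if_pos hu, if_pos hu, if_pos (show (some x : Option ℕ) = some a by rw [hxa])]
          push_cast; ring
        · rw [if_neg hu, if_neg hu, if_neg hl0]
          push_cast; ring
      simp_rw [hpt']
      rw [integral_add (integrable_const _) (uss_integrable_ite r ((c : ℝ) + 1) 0),
        uss_integral_ite r ((c : ℝ) + 1) 0 hr0 hr1, integral_const]
      have hB0 : ssEst s a = B := by rw [hsplit, if_neg hl0, add_zero]
      rw [hB0, if_pos hxa, hr, probReal_univ, one_smul]
      have hne : (c : ℝ) + 1 ≠ 0 := ne_of_gt hc0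
      field_simp
      ring
    · have hxa' : ¬ ((some x : Option ℕ) = some a) := by simp [hxa]
      by_cases hl0 : (s j₀).1 = some a
      · have hpt' : ∀ u : ℝ, (ssEst (ssUpdate x u v s) a : ℝ)
            = (B : ℝ) + (if u < r then 0 else ((c : ℝ) + 1)) := by
          intro u
          rw [hpt u]
          by_cases hu : u < r
          · rw [if_pos hu, if_pos hu, if_neg hxa']
            push_cast; ring
          · rw [if_neg hu, if_neg hu, if_pos hl0]
            push_cast; ring
        simp_rw [hpt']
        rw [integral_add (integrable_const _) (uss_integrable_ite r 0 ((c : ℝ) + 1)),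
          uss_integral_ite r 0 ((c : ℝ) + 1) hr0 hr1, integral_const]
        have hBc : (ssEst s a : ℝ) = (B : ℝ) + c := by
          rw [hsplit, if_pos hl0]; push_cast; ring
        rw [hBc, if_neg hxa, hr, probReal_univ, one_smul]
        have hne : (c : ℝ) + 1 ≠ 0 := ne_of_gt hc0
        field_simp
        ring
      · have hpt' : ∀ u : ℝ, (ssEst (ssUpdate x u v s) a : ℝ) = (B : ℝ) := by
          intro u
          rw [hpt u]
          by_cases hu : u < r
          · rw [if_pos hu, if_neg hxa', add_zero]
          · rw [if_neg hu, if_neg hl0, add_zero]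
        simp_rw [hpt']
        rw [integral_const]
        have hB0 : ssEst s a = B := by rw [hsplit, if_neg hl0, add_zero]
        simp [hB0, hxa]

lemma uss_key2 (hm : 0 < m) (x a : ℕ) (s : SSState m) (hs : UInv s) :
    ∫ p : ℝ × ℝ, (ssEst (ssUpdate x p.1 p.2 s) a : ℝ) ∂(unif01.prod unif01)
      = (ssEst s a : ℝ) + (if x = a then 1 else 0) := by
  haveI : Nonempty (Fin m) := ⟨⟨0, hm⟩⟩
  have hint : Integrable (fun p : ℝ × ℝ => (ssEst (ssUpdate x p.1 p.2 s) a : ℝ))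
      (unif01.prod unif01) := by
    refine Integrable.mono' (integrable_const ((m * (maxCount s + 1) : ℕ) : ℝ))
      (((measurable_of_countable fun s' : SSState m => ((ssEst s' a : ℕ) : ℝ)).comp
        (uss_measurable_update x s)).aestronglyMeasurable) (ae_of_all _ fun p => ?_)
    rw [Real.norm_eq_abs, abs_of_nonneg (Nat.cast_nonneg _)]
    have h1 : ssEst (ssUpdate x p.1 p.2 s) a ≤ m * (maxCount s + 1) :=
      le_trans (uss_ssEst_le _ a)
        (Nat.mul_le_mul_left m (uss_maxCount_update_le hm x p.1 p.2 s))
    exact_mod_cast h1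
  rw [integral_prod_symm _ hint]
  have h : ∀ v : ℝ, ∫ u, (ssEst (ssUpdate x u v s) a : ℝ) ∂unif01
      = (ssEst s a : ℝ) + (if x = a then 1 else 0) := uss_key hm x a s hs
  simp_rw [h]
  rw [integral_const]
  simp

/-! unbiasedness -/

set_option maxHeartbeats 2000000 in
lemma uss_unbiased {Ω : Type*} [MeasurableSpace Ω] (P : Measure Ω) [IsProbabilityMeasure P]
    (hm : 0 < m) (U V : ℕ → Ω → ℝ)
    (hmeas : ∀ t, Measurable fun ω => (U t ω, V t ω))
    (hindep : iIndepFun (fun t ω => (U t ω, V t ω)) P)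
    (hlaw : ∀ t, Measure.map (fun ω => (U t ω, V t ω)) P = unif01.prod unif01)
    (x : ℕ → ℕ) (a : ℕ) (t : ℕ) :
    ∫ ω, (ssEst (ssRun m x (fun r => U r ω) (fun r => V r ω) t) a : ℝ) ∂P
      = (trueCount x a t : ℝ) := by
  induction t with
  | zero => simp [ssRun, initState, ssEst, trueCount]
  | succ t ih =>
    set S := fun ω => ssRun m x (fun r => U r ω) (fun r => V r ω) t with hSdef
    set W := fun ω => (U t ω, V t ω) with hWdef
    have hmeasS : Measurable S := uss_measurable_run U V hmeas m x t
    have hmeasW : Measurable W := hmeas t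
    -- independence of S and W
    have hindepSW : IndepFun S W P := by
      have hDisj : Disjoint (Finset.range t) ({t} : Finset ℕ) := by
        simp [Finset.disjoint_singleton_right]
      have hIF := hindep.indepFun_finset (Finset.range t) {t} hDisj hmeas
      set φ : (↥(Finset.range t) → ℝ × ℝ) → SSState m := fun f =>
        ssRunV m x t (fun r => if hr : r ∈ Finset.range t then f ⟨r, hr⟩ else (0, 0)) with hφ
      have hφmeas : Measurable φ := by
        refine (uss_measurable_ssRunV m x t).comp (measurable_pi_lambda _ fun r => ?_)
        by_cases hr : r ∈ Finset.range t
        · simp only [hr, dif_pos]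
          exact measurable_pi_apply _
        · simp only [hr, dif_neg, not_false_iff]
          exact measurable_const
      set ψ : (↥({t} : Finset ℕ) → ℝ × ℝ) → ℝ × ℝ :=
        fun f => f ⟨t, Finset.mem_singleton_self t⟩ with hψ
      have hψmeas : Measurable ψ := measurable_pi_apply _
      have hcomp := hIF.comp hφmeas hψmeas
      have heq1 : (φ ∘ fun ω (i : ↥(Finset.range t)) => (U i ω, V i ω)) = S := by
        funext ω
        show ssRunV m x t _ = _
        rw [ssRunV]
        exact ssRun_congr x
          (fun r hr => by simp [Finset.mem_range.mpr hr])
          (fun r hr => by simp [Finset.mem_range.mpr hr])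
      have heq2 : (ψ ∘ fun ω (i : ↥({t} : Finset ℕ)) => (U i ω, V i ω)) = W := rfl
      rw [heq1, heq2] at hcomp
      exact hcomp
    set μt := Measure.map S P with hμt
    haveI : IsProbabilityMeasure μt := Measure.isProbabilityMeasure_map hmeasS.aemeasurable
    have hmap : Measure.map (fun ω => (W ω, S ω)) P = (unif01.prod unif01).prod μt := by
      rw [hμt, ← hlaw t]
      exact (indepFun_iff_map_prod_eq_prod_map_map hmeasW.aemeasurable
        hmeasS.aemeasurable).mp hindepSW.symm
    set g : (ℝ × ℝ) × SSState m → ℝ :=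
      fun q => (ssEst (ssUpdate (x t) q.1.1 q.1.2 q.2) a : ℝ) with hg
    have hgmeas : Measurable g :=
      (measurable_of_countable fun s' : SSState m => ((ssEst s' a : ℕ) : ℝ)).comp
        (uss_measurable_update_pair (x t))
    have hGood : ∀ᵐ s' ∂μt, UInv s' ∧ maxCount s' ≤ t := by
      rw [ae_iff, hμt, Measure.map_apply hmeasS MeasurableSet.of_discrete]
      convert measure_empty
      · ext ω
        simp only [Set.mem_preimage, Set.mem_setOf_eq, Set.mem_empty_iff_false, iff_false,
          not_not]
        exact ⟨uss_inv_run x _ _ t, uss_maxCount_run_le hm x _ _ t⟩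
      · infer_instance
    have hbadnull : ((unif01.prod unif01).prod μt)
        {q : (ℝ × ℝ) × SSState m | ¬ maxCount q.2 ≤ t} = 0 := by
      have he : {q : (ℝ × ℝ) × SSState m | ¬ maxCount q.2 ≤ t}
          = (Set.univ : Set (ℝ × ℝ)) ×ˢ {s' : SSState m | ¬ maxCount s' ≤ t} := by
        ext q; simp [Set.mem_prod]
      have h0 : μt {s' : SSState m | ¬ maxCount s' ≤ t} = 0 := by
        rw [hμt, Measure.map_apply hmeasS MeasurableSet.of_discrete]
        convert measure_empty
        · ext ω
          simp only [Set.mem_preimage, Set.mem_setOf_eq, Set.mem_empty_iff_false, iff_false,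
            not_not]
          exact uss_maxCount_run_le hm x _ _ t
        · infer_instance
      rw [he, Measure.prod_prod, h0, mul_zero]
    have hgint : Integrable g ((unif01.prod unif01).prod μt) := by
      refine Integrable.mono' (integrable_const ((m * (t + 1) : ℕ) : ℝ))
        hgmeas.aestronglyMeasurable ?_
      have hae : ∀ᵐ q ∂((unif01.prod unif01).prod μt), maxCount q.2 ≤ t := by
        rw [ae_iff]; exact hbadnull
      filter_upwards [hae] with q hq
      rw [hg, Real.norm_eq_abs, abs_of_nonneg (Nat.cast_nonneg _)]
      have h1 : ssEst (ssUpdate (x t) q.1.1 q.1.2 q.2) a ≤ m * (t + 1) :=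
        le_trans (uss_ssEst_le _ a)
          (Nat.mul_le_mul_left m (le_trans (uss_maxCount_update_le hm _ _ _ _) (by omega)))
      show ((ssEst (ssUpdate (x t) q.1.1 q.1.2 q.2) a : ℕ) : ℝ) ≤ ((m * (t + 1) : ℕ) : ℝ)
      exact_mod_cast h1
    have e1 : ∫ ω, (ssEst (ssRun m x (fun r => U r ω) (fun r => V r ω) (t + 1)) a : ℝ) ∂P
        = ∫ q, g q ∂((unif01.prod unif01).prod μt) := by
      rw [← hmap, integral_map (hmeasW.prodMk hmeasS).aemeasurable
        hgmeas.aestronglyMeasurable]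
      rfl
    rw [e1, integral_prod_symm g hgint]
    have e2 : ∫ s', (∫ w, g (w, s') ∂(unif01.prod unif01)) ∂μt
        = ∫ s', ((ssEst s' a : ℝ) + (if x t = a then 1 else 0)) ∂μt := by
      refine integral_congr_ae ?_
      filter_upwards [hGood] with s' hs'
      exact uss_key2 hm (x t) a s' hs'.1
    have hint1 : Integrable (fun s' : SSState m => (ssEst s' a : ℝ)) μt := by
      refine Integrable.mono' (integrable_const ((m * t : ℕ) : ℝ))
        (measurable_of_countable _).aestronglyMeasurable ?_
      filter_upwards [hGood] with s' hs'
      rw [Real.norm_eq_abs, abs_of_nonneg (Nat.cast_nonneg _)]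
      have h1 : ssEst s' a ≤ m * t :=
        le_trans (uss_ssEst_le _ a) (Nat.mul_le_mul_left m hs'.2)
      exact_mod_cast h1
    have e3 : ∫ s', (ssEst s' a : ℝ) ∂μt = ∫ ω, (ssEst (S ω) a : ℝ) ∂P := by
      rw [hμt, integral_map hmeasS.aemeasurable
        (measurable_of_countable fun s' : SSState m => ((ssEst s' a : ℕ) : ℝ)).aestronglyMeasurable]
    have e4 : (trueCount x a (t + 1) : ℝ)
        = (trueCount x a t : ℝ) + (if x t = a then 1 else 0) := by
      rw [trueCount, trueCount, Finset.range_add_one, Finset.filter_insert]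
      by_cases hxa : x t = a
      · rw [if_pos hxa, Finset.card_insert_of_notMem (by simp)]
        push_cast
        rw [if_pos hxa]
      · rw [if_neg hxa, if_neg hxa, add_zero]
    rw [e2, integral_add hint1 (integrable_const _), integral_const, e3, ih, e4]
    simp

end Aux

/-- For a fixed input stream `x`, an item `a` with
`n_a(t) > 0` and a time `t` with `P(Z_a(t) = 1) < 1`, the Unbiased Space
Saving estimate is biased upward conditional on inclusion:
`E[N̂_a(t) | Z_a(t) = 1] = n_a(t) / P(Z_a(t) = 1) > n_a(t)`. -/
theorem unbiased_space_saving_upward_bias_on_inclusion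
    {Ω : Type*} [MeasurableSpace Ω] (P : Measure Ω) [IsProbabilityMeasure P]
    (m : ℕ) (hm : 0 < m)
    (U V : ℕ → Ω → ℝ)
    (hmeas : ∀ t, Measurable fun ω => (U t ω, V t ω))
    (hindep : iIndepFun (fun t ω => (U t ω, V t ω)) P)
    (hlaw : ∀ t, Measure.map (fun ω => (U t ω, V t ω)) P = unif01.prod unif01)
    (x : ℕ → ℕ) (a : ℕ) (t : ℕ)
    (hpos : 0 < trueCount x a t)
    (hincl : P {ω | isLabel (ssRun m x (fun r => U r ω) (fun r => V r ω) t) a} < 1) :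
    (∫ ω in {ω | isLabel (ssRun m x (fun r => U r ω) (fun r => V r ω) t) a},
          (ssEst (ssRun m x (fun r => U r ω) (fun r => V r ω) t) a : ℝ) ∂P)
        / (P {ω | isLabel (ssRun m x (fun r => U r ω) (fun r => V r ω) t) a}).toReal
      = (trueCount x a t : ℝ)
        / (P {ω | isLabel (ssRun m x (fun r => U r ω) (fun r => V r ω) t) a}).toReal
    ∧ (trueCount x a t : ℝ)
      < (trueCount x a t : ℝ)
        / (P {ω | isLabel (ssRun m x (fun r => U r ω) (fun r => V r ω) t) a}).toReal := by
  classical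
  set A := {ω | isLabel (ssRun m x (fun r => U r ω) (fun r => V r ω) t) a} with hA
  have hzero : ∀ ω, ω ∉ A →
      (ssEst (ssRun m x (fun r => U r ω) (fun r => V r ω) t) a : ℝ) = 0 := by
    intro ω hω
    norm_cast
    rw [ssEst]
    apply Finset.sum_eq_zero
    intro j _
    rw [if_neg]
    exact fun e => hω ⟨j, e⟩
  have hfull : ∫ ω in A, (ssEst (ssRun m x (fun r => U r ω) (fun r => V r ω) t) a : ℝ) ∂P
      = ∫ ω, (ssEst (ssRun m x (fun r => U r ω) (fun r => V r ω) t) a : ℝ) ∂P :=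
    setIntegral_eq_integral_of_forall_compl_eq_zero hzero
  have hunb : ∫ ω, (ssEst (ssRun m x (fun r => U r ω) (fun r => V r ω) t) a : ℝ) ∂P
      = (trueCount x a t : ℝ) :=
    uss_unbiased P hm U V hmeas hindep hlaw x a t
  have hn : (0 : ℝ) < (trueCount x a t : ℝ) := by exact_mod_cast hpos
  have hPApos : 0 < (P A).toReal := by
    rcases eq_or_ne (P A) 0 with h0 | h0
    · exfalso
      have hz : ∫ ω in A, (ssEst (ssRun m x (fun r => U r ω) (fun r => V r ω) t) a : ℝ) ∂P
          = 0 := by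
        rw [Measure.restrict_eq_zero.mpr h0, integral_zero_measure]
      rw [hfull, hunb] at hz
      exact absurd hz (ne_of_gt hn)
    · exact ENNReal.toReal_pos h0 (measure_ne_top P A)
  have hPAlt1 : (P A).toReal < 1 := by
    have h1 := (ENNReal.toReal_lt_toReal (measure_ne_top P A)
      (by simp : (1 : ENNReal) ≠ ⊤)).mpr hincl
    simpa using h1
  constructor
  · rw [hfull, hunb]
  · rw [lt_div_iff₀ hPApos]
    exact mul_lt_of_lt_one_right hn hPAlt1
end

section
/- For Unbiased Space Saving, fix an item i and let D_i(t+1) = N̂_i(t+1) − N̂_i(t) − (n_i(t+1) − n_i(t)) be the martingale increment at step t+1. Conditional on the sketch state after t elements and on the identity of the (t+1)-st stream item: (a) if the arriving item is i and i is not a label in the sketch, or (b) if the arriving item is not a label in the sketch and the selected minimal bin is labeled i, then the conditional second moment satisfies E[D_i(t+1)²] = N̂_min(t), where N̂_min(t) is the count of the selected minimal bin before the update; in all other cases D_i(t+1) = 0. -/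
open MeasureTheory ProbabilityTheory Filter

lemma pickMin_min {m : ℕ} (s : SSState m) (v : ℝ) (j₀ : Fin m)
    (h : pickMin s v = some j₀) : ∀ k, (s j₀).2 ≤ (s k).2 := by
  simp only [pickMin] at h
  have hmem := List.mem_of_getElem? h
  rw [Finset.mem_sort] at hmem
  exact (Finset.mem_filter.1 hmem).2

lemma minCount_eq {m : ℕ} (s : SSState m) (v : ℝ) (j₀ : Fin m)
    (h : pickMin s v = some j₀) : minCount s = (s j₀).2 := by
  have : Nonempty (Fin m) := ⟨j₀⟩
  exact le_antisymm (ciInf_le (OrderBot.bddBelow _) j₀) (le_ciInf (pickMin_min s v j₀ h))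

lemma ssEst_eq_single {m : ℕ} (s : SSState m) (j₀ : Fin m) (i : ℕ)
    (h : (s j₀).1 = some i) (hothers : ∀ j, j ≠ j₀ → (s j).1 ≠ some i) :
    ssEst s i = (s j₀).2 := by
  unfold ssEst
  rw [Finset.sum_eq_single j₀]
  · simp [h]
  · intro j _ hj; simp [hothers j hj]
  · simp

lemma ssEst_eq_zero {m : ℕ} (s : SSState m) (i : ℕ)
    (h : ∀ j, (s j).1 ≠ some i) : ssEst s i = 0 := by
  unfold ssEst
  exact Finset.sum_eq_zero fun j _ => by simp [h j]

lemma ssEst_update_eq {m : ℕ} (s : SSState m) (j₀ : Fin m) (lbl : Option ℕ)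
    (c : ℕ) (i : ℕ) (hothers : ∀ j, j ≠ j₀ → (s j).1 ≠ some i) :
    ssEst (Function.update s j₀ (lbl, c)) i = if lbl = some i then c else 0 := by
  unfold ssEst
  rw [Finset.sum_eq_single j₀]
  · simp
  · intro j _ hj; simp [Function.update_of_ne hj, hothers j hj]
  · simp

lemma step_integral (p a b : ℝ) (hp0 : 0 ≤ p) (hp1 : p ≤ 1) :
    (∫ u in Set.Ico (0:ℝ) 1, (if u < p then a else b))
      = p * a + (1 - p) * b := by
  have hsplit : Set.Ico (0:ℝ) 1 = Set.Ico 0 p ∪ Set.Ico p 1 :=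
    (Set.Ico_union_Ico_eq_Ico hp0 hp1).symm
  have hdisj : Disjoint (Set.Ico (0:ℝ) p) (Set.Ico p 1) :=
    Set.Ico_disjoint_Ico_same
  have h1 : Set.EqOn (fun u : ℝ => if u < p then a else b) (fun _ => a)
      (Set.Ico 0 p) := fun u hu => if_pos hu.2
  have h2 : Set.EqOn (fun u : ℝ => if u < p then a else b) (fun _ => b)
      (Set.Ico p 1) := fun u hu => if_neg (not_lt.2 hu.1)
  rw [hsplit, setIntegral_union hdisj measurableSet_Ico
      (((integrableOn_const_iff (by simp)).2 (Or.inr measure_Ico_lt_top)).congr_fun h1.symm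
        measurableSet_Ico)
      (((integrableOn_const_iff (by simp)).2 (Or.inr measure_Ico_lt_top)).congr_fun h2.symm
        measurableSet_Ico),
    setIntegral_congr_fun measurableSet_Ico h1,
    setIntegral_congr_fun measurableSet_Ico h2]
  simp [Real.volume_Ico, smul_eq_mul, ENNReal.toReal_ofReal hp0,
    ENNReal.toReal_ofReal (sub_nonneg.2 hp1), hp0, sub_nonneg.2 hp1]

/-- One step of Unbiased Space Saving: fix an item `i`, a
sketch state `s` (with pairwise distinct labels, as is invariant for the
algorithm) reached after `t` elements, the identity `x` of the arriving
`(t+1)`-st item, the tie-breaking randomness `v`, and let `j₀` be the selected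
minimal bin.  Let `D u = N̂_i(t+1) − N̂_i(t) − (n_i(t+1) − n_i(t))` be the
martingale increment when the label-replacement randomness is `u`.  If
(a) the arriving item is `i` and `i` is not a label of the sketch, or
(b) the arriving item is not a label of the sketch and the selected minimal
bin is labeled `i`, then the conditional second moment (over the uniform coin
`u`) satisfies `E[D²] = N̂_min(t)`, the count of the selected minimal bin
before the update; in all other cases `D = 0`. -/
theorem unbiased_space_saving_increment_second_moment
    (m : ℕ) (hm : 0 < m) (s : SSState m)
    (hdistinct : ∀ (j k : Fin m) (a : ℕ), (s j).1 = some a → (s k).1 = some a → j = k)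
    (x i : ℕ) (v : ℝ) (j₀ : Fin m) (hj₀ : pickMin s v = some j₀) :
    (((x = i ∧ ¬ isLabel s i) ∨ (¬ isLabel s x ∧ (s j₀).1 = some i)) →
      ∫ u in Set.Ico (0:ℝ) 1,
          ((ssEst (ssUpdate x u v s) i : ℝ) - (ssEst s i : ℝ)
              - (if x = i then 1 else 0)) ^ 2
        = (minCount s : ℝ))
    ∧ (¬ ((x = i ∧ ¬ isLabel s i) ∨ (¬ isLabel s x ∧ (s j₀).1 = some i)) →
      ∀ u ∈ Set.Ico (0:ℝ) 1,
        (ssEst (ssUpdate x u v s) i : ℝ) - (ssEst s i : ℝ)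
            - (if x = i then 1 else 0) = 0) := by
  have hmin := minCount_eq s v j₀ hj₀
  set c : ℕ := (s j₀).2 with hcdef
  set p : ℝ := 1 / ((c : ℝ) + 1) with hpdef
  have hc1 : (0:ℝ) < (c:ℝ) + 1 := by positivity
  have hp0 : 0 ≤ p := by positivity
  have hp1 : p ≤ 1 := by
    rw [hpdef, div_le_one hc1]
    have := Nat.cast_nonneg (α := ℝ) c
    linarith
  have harith : p * (c:ℝ) ^ 2 + (1 - p) * 1 = (c:ℝ) := by
    rw [hpdef]; field_simp; ring
  constructor
  · rintro (⟨hxi, hni⟩ | ⟨hnx, hlbl⟩)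
    · -- case (a)
      subst hxi
      have hbranch : ¬ ∃ j, (s j).1 = some x := hni
      have hni' : ∀ j, (s j).1 ≠ some x := fun j hj => hni ⟨j, hj⟩
      have hest0 : ssEst s x = 0 := ssEst_eq_zero s x hni'
      have key : ∀ u : ℝ,
          ((ssEst (ssUpdate x u v s) x : ℝ) - (ssEst s x : ℝ)
              - (if x = x then 1 else 0)) ^ 2
            = if u < p then (c:ℝ)^2 else 1 := by
        intro u
        have hupd : ssUpdate x u v s
            = Function.update s j₀ ((if u < p then some x else (s j₀).1), c + 1) := by
          unfold ssUpdate
          rw [if_neg hbranch, hj₀]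
        rw [hupd, ssEst_update_eq s j₀ _ _ x (fun j hj => hni' j), hest0]
        by_cases hu : u < p
        · simp only [if_pos hu, eq_self_iff_true, if_true]
          push_cast; ring
        · simp only [if_neg hu, if_neg (hni' j₀), eq_self_iff_true, if_true]
          push_cast; ring
      rw [hmin, ← harith, ← step_integral p ((c:ℝ)^2) 1 hp0 hp1]
      exact setIntegral_congr_fun measurableSet_Ico fun u _ => key u
    · -- case (b)
      have hxi : x ≠ i := fun he => hnx ⟨j₀, he ▸ hlbl⟩
      have hbranch : ¬ ∃ j, (s j).1 = some x := hnx
      have hothers : ∀ j, j ≠ j₀ → (s j).1 ≠ some i :=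
        fun j hj h => hj (hdistinct j j₀ i h hlbl)
      have hest : ssEst s i = c := ssEst_eq_single s j₀ i hlbl hothers
      have key : ∀ u : ℝ,
          ((ssEst (ssUpdate x u v s) i : ℝ) - (ssEst s i : ℝ)
              - (if x = i then 1 else 0)) ^ 2
            = if u < p then (c:ℝ)^2 else 1 := by
        intro u
        have hupd : ssUpdate x u v s
            = Function.update s j₀ ((if u < p then some x else (s j₀).1), c + 1) := by
          unfold ssUpdate
          rw [if_neg hbranch, hj₀]
        rw [hupd, ssEst_update_eq s j₀ _ _ i hothers, hest, if_neg hxi]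
        by_cases hu : u < p
        · simp only [if_pos hu, if_neg (show some x ≠ some i by simp [hxi])]
          push_cast; ring
        · simp only [if_neg hu, if_pos hlbl]
          push_cast; ring
      rw [hmin, ← harith, ← step_integral p ((c:ℝ)^2) 1 hp0 hp1]
      exact setIntegral_congr_fun measurableSet_Ico fun u _ => key u
  · intro h u _
    by_cases hx : isLabel s x
    · obtain ⟨j₁, hj₁⟩ := hx
      have hupd : ssUpdate x u v s
          = fun j => if (s j).1 = some x then (some x, (s j).2 + 1) else s j := by
        unfold ssUpdate
        rw [if_pos ⟨j₁, hj₁⟩]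
      have hothers : ∀ j, j ≠ j₁ → (s j).1 ≠ some x :=
        fun j hj hh => hj (hdistinct j j₁ x hh hj₁)
      by_cases hxi : x = i
      · subst hxi
        have h1 : ssEst s x = (s j₁).2 := ssEst_eq_single s j₁ x hj₁ hothers
        have h2 : ssEst (ssUpdate x u v s) x = (s j₁).2 + 1 := by
          rw [hupd]
          have h3 := ssEst_eq_single (m := m)
            (fun j => if (s j).1 = some x then (some x, (s j).2 + 1) else s j) j₁ x
            (by simp [hj₁]) (fun j hj => by simp [hothers j hj])
          simpa [hj₁] using h3
        rw [h1, h2]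
        simp only [eq_self_iff_true, if_true]
        push_cast; ring
      · have h2 : ssEst (ssUpdate x u v s) i = ssEst s i := by
          rw [hupd]
          unfold ssEst
          refine Finset.sum_congr rfl fun j _ => ?_
          by_cases hh : (s j).1 = some x
          · simp [hh, hxi]
          · simp [hh]
        rw [h2, if_neg hxi]
        ring
    · have hxi : x ≠ i := fun he => h (Or.inl ⟨he, he ▸ hx⟩)
      have hlbl' : (s j₀).1 ≠ some i := fun hh => h (Or.inr ⟨hx, hh⟩)
      have hbranch : ¬ ∃ j, (s j).1 = some x := hx
      have hupd : ssUpdate x u v s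
          = Function.update s j₀ ((if u < p then some x else (s j₀).1), c + 1) := by
        unfold ssUpdate
        rw [if_neg hbranch, hj₀]
      have h2 : ssEst (ssUpdate x u v s) i = ssEst s i := by
        rw [hupd]
        unfold ssEst
        refine Finset.sum_congr rfl fun j _ => ?_
        by_cases hjj : j = j₀
        · subst hjj
          rw [Function.update_self]
          by_cases hu : u < p
          · simp [hu, hxi, hlbl']
          · simp [hu, hlbl']
        · rw [Function.update_of_ne hjj]
      rw [h2, if_neg hxi]
      ring
end

section
/- Let α = Σ_{j > m} p_j be the total probability of items outside the top m. Then for any α' < α, almost surely N̂_min(t) > α' t / m for all sufficiently large t, where N̂_min(t) is the minimal bin count of the Unbiased Space Saving sketch after t elements. -/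
open MeasureTheory ProbabilityTheory Filter

section Det

open Finset

variable {m : ℕ}

lemma minCount_le (s : SSState m) (j : Fin m) : minCount s ≤ (s j).2 :=
  Nat.sInf_le ⟨j, rfl⟩

lemma le_minCount (hm : 0 < m) (s : SSState m) (a : ℕ) (h : ∀ j, a ≤ (s j).2) :
    a ≤ minCount s := by
  haveI : Nonempty (Fin m) := ⟨⟨0, hm⟩⟩
  exact le_ciInf h

lemma pickMin_spec (hm : 0 < m) (s : SSState m) (v : ℝ) :
    ∃ j₀, pickMin s v = some j₀ ∧ ∀ k, (s j₀).2 ≤ (s k).2 := by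
  classical
  haveI : Nonempty (Fin m) := ⟨⟨0, hm⟩⟩
  obtain ⟨j, hj⟩ : ∃ j, ∀ k, (s j).2 ≤ (s k).2 := by
    obtain ⟨j, hj⟩ : minCount s ∈ Set.range fun j => (s j).2 :=
      Nat.sInf_mem (Set.range_nonempty _)
    exact ⟨j, fun k => by rw [show (s j).2 = minCount s from hj]; exact minCount_le s k⟩
  set l := (Finset.univ.filter fun j => ∀ k, (s j).2 ≤ (s k).2).sort (· ≤ ·) with hl
  have hlen : 0 < l.length := by
    rw [hl, Finset.length_sort]
    exact Finset.card_pos.2 ⟨j, Finset.mem_filter.2 ⟨Finset.mem_univ _, hj⟩⟩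
  have hidx : min (⌊v * l.length⌋.toNat) (l.length - 1) < l.length :=
    lt_of_le_of_lt (min_le_right _ _) (by omega)
  refine ⟨l.get ⟨_, hidx⟩, ?_, ?_⟩
  · show pickMin s v = _
    rw [pickMin]
    exact List.getElem?_eq_getElem hidx
  · have hmem : l.get ⟨_, hidx⟩ ∈ l := List.get_mem _ _
    exact (Finset.mem_filter.1 ((Finset.mem_sort _).1 hmem)).2

lemma count_le_ssUpdate (x : ℕ) (u v : ℝ) (s : SSState m) (j : Fin m) :
    (s j).2 ≤ (ssUpdate x u v s j).2 := by
  classical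
  by_cases h : ∃ k, (s k).1 = some x
  · rw [ssUpdate, if_pos h]
    by_cases hx : (s j).1 = some x <;> simp [hx]
  · rcases hpk : pickMin s v with _ | j₀
    · rw [ssUpdate, if_neg h, hpk]
    · rw [ssUpdate, if_neg h, hpk]
      show (s j).2 ≤ (Function.update s j₀
        ((if u < 1 / (((s j₀).2 : ℝ) + 1) then some x else (s j₀).1), (s j₀).2 + 1) j).2
      by_cases hj : j = j₀
      · subst hj; rw [Function.update_self]; exact Nat.le_succ _
      · rw [Function.update_of_ne hj]

lemma minCount_le_ssUpdate (hm : 0 < m) (x : ℕ) (u v : ℝ) (s : SSState m) :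
    minCount s ≤ minCount (ssUpdate x u v s) :=
  le_minCount hm _ _ fun j => (minCount_le s j).trans (count_le_ssUpdate x u v s j)

/-- potential function -/
noncomputable def ssPhi (s : SSState m) : ℕ := ∑ j, min ((s j).2) (minCount s + 1)

lemma ssPhi_le (s : SSState m) : ssPhi s ≤ m * (minCount s + 1) := by
  calc ssPhi s ≤ ∑ _j : Fin m, (minCount s + 1) :=
        Finset.sum_le_sum fun j _ => min_le_right _ _
    _ = m * (minCount s + 1) := by simp [mul_comm]

open scoped Classical in
lemma ssPhi_step (hm : 0 < m) (x : ℕ) (u v : ℝ) (s : SSState m) :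
    ssPhi s + (if isLabel s x then 0 else 1) ≤ ssPhi (ssUpdate x u v s) := by
  classical
  haveI : Nonempty (Fin m) := ⟨⟨0, hm⟩⟩
  have hcnt := count_le_ssUpdate x u v s
  have hM : minCount s + 1 ≤ minCount (ssUpdate x u v s) + 1 := by
    have := minCount_le_ssUpdate hm x u v s; omega
  by_cases h : ∃ k, (s k).1 = some x
  · rw [if_pos (show isLabel s x from h), add_zero]
    exact Finset.sum_le_sum fun j _ => min_le_min (hcnt j) hM
  · rw [if_neg (show ¬ isLabel s x from h)]
    obtain ⟨j₀, hpk, hmin⟩ := pickMin_spec hm s v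
    have hj₀ : (s j₀).2 = minCount s :=
      le_antisymm (le_minCount hm s _ hmin) (minCount_le s j₀)
    have hs' : ssUpdate x u v s =
        Function.update s j₀
          ((if u < 1 / (((s j₀).2 : ℝ) + 1) then some x else (s j₀).1), (s j₀).2 + 1) := by
      rw [ssUpdate, if_neg h, hpk]
    have key : ssPhi s + 1 ≤ ∑ j, min ((ssUpdate x u v s j).2) (minCount s + 1) := by
      rw [ssPhi]
      rw [Finset.sum_eq_sum_sdiff_singleton_add (Finset.mem_univ j₀)
        (fun j => min ((s j).2) (minCount s + 1))]
      rw [Finset.sum_eq_sum_sdiff_singleton_add (Finset.mem_univ j₀)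
        (fun j => min ((ssUpdate x u v s j).2) (minCount s + 1))]
      have h1 : ∀ j ∈ Finset.univ \ {j₀},
          min ((s j).2) (minCount s + 1) ≤ min ((ssUpdate x u v s j).2) (minCount s + 1) :=
        fun j _ => min_le_min (hcnt j) le_rfl
      have h2 : (ssUpdate x u v s j₀).2 = minCount s + 1 := by
        rw [hs', Function.update_self, ← hj₀]
      have h3 : min ((s j₀).2) (minCount s + 1) = minCount s := by
        rw [hj₀]; omega
      have h4 : min ((ssUpdate x u v s j₀).2) (minCount s + 1) = minCount s + 1 := by
        rw [h2]; omega
      rw [h3, h4]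
      have := Finset.sum_le_sum h1
      omega
    refine key.trans (Finset.sum_le_sum fun j _ => min_le_min le_rfl hM)

open scoped Classical in
/-- number of non-label arrivals among the first `t` -/
noncomputable def nlCount (m : ℕ) (x : ℕ → ℕ) (u v : ℕ → ℝ) (t : ℕ) : ℕ :=
  ∑ r ∈ Finset.range t, if isLabel (ssRun m x u v r) (x r) then 0 else 1

lemma nlCount_mono (x : ℕ → ℕ) (u v : ℕ → ℝ) {t t' : ℕ} (h : t ≤ t') :
    nlCount m x u v t ≤ nlCount m x u v t' := by
  classical
  exact Finset.sum_le_sum_of_subset (Finset.range_subset_range.2 h)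

lemma nlCount_le (hm : 0 < m) (x : ℕ → ℕ) (u v : ℕ → ℝ) (t : ℕ) :
    nlCount m x u v t ≤ m * (minCount (ssRun m x u v t) + 1) := by
  classical
  have main : ∀ t, nlCount m x u v t ≤ ssPhi (ssRun m x u v t) := by
    intro t
    induction t with
    | zero => simp [nlCount]
    | succ t ih =>
      rw [nlCount, Finset.sum_range_succ]
      have := ssPhi_step hm (x t) (u t) (v t) (ssRun m x u v t)
      have h2 : nlCount m x u v t + (if isLabel (ssRun m x u v t) (x t) then 0 else 1)
          ≤ ssPhi (ssRun m x u v t) + (if isLabel (ssRun m x u v t) (x t) then 0 else 1) := by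
        omega
      rw [nlCount] at h2
      exact h2.trans this
  exact (main t).trans (ssPhi_le _)

end Det
section Sums

open Finset

lemma sum_card_le {p : ℕ → ℝ} (hp0 : ∀ i, 0 ≤ p i) (hpmono : Antitone p) :
    ∀ (n : ℕ) (S : Finset ℕ), S.card = n → ∑ i ∈ S, p i ≤ ∑ i ∈ Finset.range n, p i := by
  intro n
  induction n with
  | zero =>
    intro S hS
    rw [Finset.card_eq_zero.1 hS]
    simp
  | succ n ih =>
    intro S hS
    have hne : S.Nonempty := Finset.card_pos.1 (by omega)
    set a := S.max' hne with ha
    have hsub : S ⊆ Finset.range (a + 1) := fun b hb =>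
      Finset.mem_range.2 (Nat.lt_succ_of_le (S.le_max' b hb))
    have hcard : n + 1 ≤ a + 1 := by
      have := Finset.card_le_card hsub
      rw [hS] at this; simpa using this
    have hna : n ≤ a := by omega
    have hmem : a ∈ S := S.max'_mem hne
    calc ∑ i ∈ S, p i = ∑ i ∈ S.erase a, p i + p a := (Finset.sum_erase_add S _ hmem).symm
      _ ≤ ∑ i ∈ Finset.range n, p i + p n := by
          refine add_le_add (ih _ ?_) (hpmono hna)
          rw [Finset.card_erase_of_mem hmem, hS]; omega
      _ = ∑ i ∈ Finset.range (n + 1), p i := (Finset.sum_range_succ p n).symm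

lemma sum_le_top {m : ℕ} {p : ℕ → ℝ} (hp0 : ∀ i, 0 ≤ p i) (hpmono : Antitone p)
    (S : Finset ℕ) (h : S.card ≤ m) : ∑ i ∈ S, p i ≤ ∑ i ∈ Finset.range m, p i :=
  (sum_card_le hp0 hpmono S.card S rfl).trans
    (Finset.sum_le_sum_of_subset_of_nonneg
      (Finset.range_subset_range.2 h) (fun i _ _ => hp0 i))

lemma summable_p {p : ℕ → ℝ} (hpsum : ∑' i, p i = 1) : Summable p := by
  by_contra h
  rw [tsum_eq_zero_of_not_summable h] at hpsum
  norm_num at hpsum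

lemma range_sum_eq {m : ℕ} {p : ℕ → ℝ} (hp0 : ∀ i, 0 ≤ p i) (hpsum : ∑' i, p i = 1) :
    ∑ i ∈ Finset.range m, p i = 1 - ∑' j, if m ≤ j then p j else 0 := by
  have hsum : Summable p := summable_p hpsum
  set f : ℕ → ℝ := fun j => if m ≤ j then p j else 0 with hf
  set g : ℕ → ℝ := fun j => if m ≤ j then 0 else p j with hg
  have hfg : ∀ j, f j + g j = p j := by
    intro j; rw [hf, hg]; dsimp only; split <;> ring
  have hsf : Summable f := by
    refine Summable.of_nonneg_of_le (fun j => ?_) (fun j => ?_) hsum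
    · rw [hf]; dsimp only; split
      · exact hp0 j
      · exact le_rfl
    · rw [hf]; dsimp only; split
      · exact le_rfl
      · exact hp0 j
  have hsg : Summable g := by
    refine summable_of_ne_finset_zero (s := Finset.range m) (fun j hj => ?_)
    rw [hg]; dsimp only
    rw [if_pos (by simpa using hj)]
  have hadd : (∑' j, f j) + (∑' j, g j) = 1 := by
    rw [← Summable.tsum_add hsf hsg]
    rw [← hpsum]
    exact tsum_congr hfg
  have hgeq : (∑' j, g j) = ∑ i ∈ Finset.range m, p i := by
    rw [tsum_eq_sum (s := Finset.range m) (fun j hj => by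
      rw [hg]; dsimp only; rw [if_pos (by simpa using hj)])]
    refine Finset.sum_congr rfl (fun j hj => ?_)
    rw [hg]; dsimp only
    rw [if_neg (by simp only [not_le]; simpa using hj)]
  rw [← hadd, hgeq, hf]
  ring

end Sums

section Labels

open Finset

variable {m : ℕ}

/-- the finite set of labels of a sketch state -/
def labelSet (s : SSState m) : Finset ℕ :=
  Finset.univ.biUnion fun j => ((s j).1).toFinset

lemma card_labelSet_le (s : SSState m) : (labelSet s).card ≤ m := by
  refine (Finset.card_biUnion_le).trans ?_
  calc ∑ j : Fin m, ((s j).1).toFinset.card ≤ ∑ _j : Fin m, 1 := by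
        refine Finset.sum_le_sum fun j _ => ?_
        rcases (s j).1 with _ | i <;> simp [Option.toFinset]
    _ = m := by simp

lemma mem_labelSet {s : SSState m} {i : ℕ} : i ∈ labelSet s ↔ isLabel s i := by
  simp [labelSet, isLabel, Option.mem_toFinset, eq_comm]

/-- the conditional probability that the next arrival is a current label -/
noncomputable def Gfun (p : ℕ → ℝ) (s : SSState m) : ℝ := ∑ i ∈ labelSet s, p i

lemma Gfun_nonneg {p : ℕ → ℝ} (hp0 : ∀ i, 0 ≤ p i) (s : SSState m) : 0 ≤ Gfun p s :=
  Finset.sum_nonneg fun i _ => hp0 i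

lemma Gfun_le {p : ℕ → ℝ} (hp0 : ∀ i, 0 ≤ p i) (hpmono : Antitone p) (s : SSState m) :
    Gfun p s ≤ ∑ i ∈ Finset.range m, p i :=
  sum_le_top hp0 hpmono _ (card_labelSet_le s)

end Labels
section Meas

instance (α : Type*) : MeasurableSpace (Option α) := ⊤
instance (α : Type*) : MeasurableSingletonClass (Option α) := ⟨fun _ => trivial⟩

variable {m : ℕ}

lemma measurable_pickMin (s : SSState m) : Measurable fun v : ℝ => pickMin s v := by
  have key : ∀ l : List (Fin m),
      Measurable fun v : ℝ => l[min (⌊v * l.length⌋.toNat) (l.length - 1)]? := by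
    intro l
    exact (measurable_of_countable
        (fun n : ℤ => l[min n.toNat (l.length - 1)]?)).comp
      (Int.measurable_floor.comp (measurable_id.mul_const _))
  exact key _

lemma measurable_ssUpdate_prod (s' : SSState m) :
    Measurable fun q : (ℝ × ℝ) × ℕ => ssUpdate q.2 q.1.1 q.1.2 s' := by
  classical
  refine measurable_from_prod_countable_left fun x => ?_
  by_cases h : ∃ j, (s' j).1 = some x
  · have heq : (fun uv : ℝ × ℝ => ssUpdate x uv.1 uv.2 s')
        = fun _ => (fun j => if (s' j).1 = some x then (some x, (s' j).2 + 1) else s' j) := by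
      funext uv; rw [ssUpdate, if_pos h]
    rw [heq]; exact measurable_const
  · have heq : (fun uv : ℝ × ℝ => ssUpdate x uv.1 uv.2 s')
        = (fun q : ℝ × Option (Fin m) =>
            match q.2 with
            | none => s'
            | some j₀ =>
                if q.1 < 1 / (((s' j₀).2 : ℝ) + 1) then
                  Function.update s' j₀ (some x, (s' j₀).2 + 1)
                else Function.update s' j₀ ((s' j₀).1, (s' j₀).2 + 1))
          ∘ (fun uv : ℝ × ℝ => (uv.1, pickMin s' uv.2)) := by
      funext uv
      simp only [Function.comp_apply]
      rw [ssUpdate, if_neg h]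
      rcases pickMin s' uv.2 with _ | j₀
      · rfl
      · show Function.update s' j₀ _ = _
        exact apply_ite (fun o => Function.update s' j₀ (o, (s' j₀).2 + 1)) _ _ _
    rw [heq]
    refine Measurable.comp ?_ (measurable_fst.prodMk ((measurable_pickMin s').comp measurable_snd))
    refine measurable_from_prod_countable_left fun o => ?_
    rcases o with _ | j₀
    · exact measurable_const
    · exact Measurable.ite (measurableSet_lt measurable_id measurable_const)
        measurable_const measurable_const

lemma measurable_ssUpdate_triple (s' : SSState m) :
    Measurable fun e : ℕ × ℝ × ℝ => ssUpdate e.1 e.2.1 e.2.2 s' :=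
  (measurable_ssUpdate_prod s').comp
    (((measurable_snd.fst).prodMk (measurable_snd.snd)).prodMk measurable_fst)

/-- run of the sketch as a function on sequence space -/
noncomputable def stateW (m : ℕ) (w : ℕ → ℕ × ℝ × ℝ) (t : ℕ) : SSState m :=
  ssRun m (fun r => (w r).1) (fun r => (w r).2.1) (fun r => (w r).2.2) t

lemma stateW_congr {w w' : ℕ → ℕ × ℝ × ℝ} (t : ℕ) (h : ∀ r, r < t → w r = w' r) :
    stateW m w t = stateW m w' t := by
  induction t with
  | zero => rfl
  | succ t ih =>
    show ssUpdate ((w t).1) ((w t).2.1) ((w t).2.2) (stateW m w t)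
      = ssUpdate ((w' t).1) ((w' t).2.1) ((w' t).2.2) (stateW m w' t)
    rw [h t (Nat.lt_succ_self t), ih (fun r hr => h r (hr.trans (Nat.lt_succ_self t)))]

lemma measurable_stateW (t : ℕ) : Measurable fun w : ℕ → ℕ × ℝ × ℝ => stateW m w t := by
  induction t with
  | zero => exact measurable_const
  | succ t ih =>
    refine measurable_to_countable' fun c => ?_
    have heq : (fun w : ℕ → ℕ × ℝ × ℝ => stateW m w (t + 1)) ⁻¹' {c}
        = ⋃ c' : SSState m, ((fun w : ℕ → ℕ × ℝ × ℝ => stateW m w t) ⁻¹' {c'})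
            ∩ ((fun w : ℕ → ℕ × ℝ × ℝ => w t) ⁻¹'
                ((fun e : ℕ × ℝ × ℝ => ssUpdate e.1 e.2.1 e.2.2 c') ⁻¹' {c})) := by
      ext w
      simp only [Set.mem_preimage, Set.mem_iUnion, Set.mem_inter_iff, Set.mem_singleton_iff]
      constructor
      · intro hw
        exact ⟨stateW m w t, rfl, hw⟩
      · rintro ⟨c', h1, h2⟩
        show ssUpdate ((w t).1) ((w t).2.1) ((w t).2.2) (stateW m w t) = c
        rw [h1]; exact h2
    rw [heq]
    exact MeasurableSet.iUnion fun c' =>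
      (ih (measurableSet_singleton c')).inter
        ((measurable_pi_apply t) ((measurable_ssUpdate_triple c') (measurableSet_singleton c)))

lemma measurable_stateOmega {Ω : Type*} [MeasurableSpace Ω]
    (X : ℕ → Ω → ℕ) (U V : ℕ → Ω → ℝ)
    (hmeas : ∀ t, Measurable fun ω => (X t ω, U t ω, V t ω)) (t : ℕ) :
    Measurable fun ω => ssRun m (fun r => X r ω) (fun r => U r ω) (fun r => V r ω) t := by
  have hseq : Measurable fun ω => (fun r => (X r ω, U r ω, V r ω) : ℕ → ℕ × ℝ × ℝ) :=
    measurable_pi_lambda _ hmeas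
  exact (measurable_stateW t).comp hseq

end Meas
section Prob

open scoped Classical in
/-- centered label-hit function -/
noncomputable def phiY {m : ℕ} (p : ℕ → ℝ) (q : SSState m × ℕ) : ℝ :=
  (if isLabel q.1 q.2 then 1 else 0) - Gfun p q.1

variable {m : ℕ} {p : ℕ → ℝ}

lemma tail_nonneg (hp0 : ∀ i, 0 ≤ p i) : 0 ≤ ∑' j, if m ≤ j then p j else 0 := by
  refine tsum_nonneg fun j => ?_
  by_cases h : m ≤ j
  · rw [if_pos h]; exact hp0 j
  · rw [if_neg h]

lemma Gfun_le_one (hp0 : ∀ i, 0 ≤ p i) (hpmono : Antitone p) (hpsum : ∑' i, p i = 1)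
    (c : SSState m) : Gfun p c ≤ 1 := by
  have h2 := Gfun_le hp0 hpmono c
  rw [range_sum_eq hp0 hpsum] at h2
  have := tail_nonneg (m := m) hp0
  linarith

lemma abs_phiY_le (hp0 : ∀ i, 0 ≤ p i) (hpmono : Antitone p) (hpsum : ∑' i, p i = 1)
    (q : SSState m × ℕ) : |phiY p q| ≤ 1 := by
  have h0 : 0 ≤ Gfun p q.1 := Gfun_nonneg hp0 _
  have h1 : Gfun p q.1 ≤ 1 := Gfun_le_one hp0 hpmono hpsum _
  rw [phiY, abs_le]
  constructor
  · split <;> linarith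
  · split <;> linarith

lemma itemLaw_apply (hp0 : ∀ i, 0 ≤ p i) (S : Finset ℕ) :
    itemLaw p (↑S) = ENNReal.ofReal (∑ i ∈ S, p i) := by
  classical
  have hS : MeasurableSet (↑S : Set ℕ) := (Set.to_countable _).measurableSet
  rw [itemLaw, Measure.sum_apply _ hS]
  have key : ∀ i : ℕ, (ENNReal.ofReal (p i) • Measure.dirac i) ↑S
      = if i ∈ S then ENNReal.ofReal (p i) else 0 := by
    intro i
    rw [Measure.smul_apply, Measure.dirac_apply' _ hS, smul_eq_mul]
    by_cases hi : i ∈ S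
    · rw [Set.indicator_of_mem (by exact_mod_cast hi), if_pos hi, Pi.one_apply, mul_one]
    · rw [Set.indicator_of_notMem (by exact_mod_cast hi), if_neg hi, mul_zero]
  rw [tsum_congr key, tsum_eq_sum (s := S) (fun i hi => if_neg hi),
    Finset.sum_congr rfl (fun i hi => if_pos hi)]
  exact (ENNReal.ofReal_sum_of_nonneg (fun i _ => hp0 i)).symm

lemma itemLaw_univ (hp0 : ∀ i, 0 ≤ p i) (hpsum : ∑' i, p i = 1) :
    itemLaw p Set.univ = 1 := by
  rw [itemLaw, Measure.sum_apply _ MeasurableSet.univ]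
  have key : ∀ i : ℕ, (ENNReal.ofReal (p i) • Measure.dirac i) Set.univ
      = ENNReal.ofReal (p i) := by
    intro i
    rw [Measure.smul_apply, smul_eq_mul]
    simp
  rw [tsum_congr key, ← ENNReal.ofReal_tsum_of_nonneg hp0 (summable_p hpsum), hpsum,
    ENNReal.ofReal_one]

lemma integral_phiY (hp0 : ∀ i, 0 ≤ p i) (hpmono : Antitone p) (hpsum : ∑' i, p i = 1)
    (c : SSState m) : ∫ i, phiY p (c, i) ∂(itemLaw p) = 0 := by
  classical
  haveI : IsProbabilityMeasure (itemLaw p) := ⟨itemLaw_univ hp0 hpsum⟩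
  have hS : MeasurableSet (↑(labelSet c) : Set ℕ) := (Set.to_countable _).measurableSet
  have heq : (fun i => phiY p (c, i))
      = fun i => Set.indicator (↑(labelSet c)) (fun _ => (1:ℝ)) i - Gfun p c := by
    funext i
    rw [phiY]
    congr 1
    by_cases hi : isLabel c i
    · rw [if_pos hi, Set.indicator_of_mem (by exact_mod_cast mem_labelSet.2 hi)]
    · rw [if_neg hi,
        Set.indicator_of_notMem (by exact_mod_cast fun hmem => hi (mem_labelSet.1 hmem))]
  rw [heq, integral_sub ((integrable_const (1:ℝ)).indicator hS) (integrable_const _),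
    integral_indicator_const (1:ℝ) hS, integral_const, measureReal_def, measureReal_def, itemLaw_apply hp0,
    ENNReal.toReal_ofReal (Finset.sum_nonneg fun i _ => hp0 i), measure_univ]
  simp [Gfun]

lemma unif01_prob : IsProbabilityMeasure unif01 := by
  constructor
  rw [unif01, Measure.restrict_apply_univ, Real.volume_Ico]
  norm_num

lemma map_X_eq {Ω : Type*} [MeasurableSpace Ω] (P : Measure Ω)
    (X : ℕ → Ω → ℕ) (U V : ℕ → Ω → ℝ)
    (hmeas : ∀ t, Measurable fun ω => (X t ω, U t ω, V t ω))
    (hlaw : ∀ t, Measure.map (fun ω => (X t ω, U t ω, V t ω)) P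
      = (itemLaw p).prod (unif01.prod unif01)) (s : ℕ) :
    Measure.map (X s) P = itemLaw p := by
  haveI := unif01_prob
  have h1 : X s = (fun e : ℕ × ℝ × ℝ => e.1) ∘ (fun ω => (X s ω, U s ω, V s ω)) := rfl
  rw [h1, ← Measure.map_map measurable_fst (hmeas s), hlaw s, Measure.map_fst_prod,
    measure_univ, one_smul]

/-- embed a tuple over `range s` into a full sequence -/
noncomputable def fromTuple (s : ℕ)
    (f : (i : (Finset.range s : Finset ℕ)) → ℕ × ℝ × ℝ) : ℕ → ℕ × ℝ × ℝ :=
  fun r => if h : r < s then f ⟨r, Finset.mem_range.2 h⟩ else (0, 0, 0)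

lemma measurable_fromTuple (s : ℕ) : Measurable (fromTuple s) := by
  refine measurable_pi_lambda _ fun r => ?_
  by_cases h : r < s
  · simp only [fromTuple, dif_pos h]
    exact measurable_pi_apply _
  · simp only [fromTuple, dif_neg h]
    exact measurable_const

lemma exp_mul_phiY_eq_zero {Ω : Type*} [MeasurableSpace Ω] (P : Measure Ω)
    [IsProbabilityMeasure P]
    (hp0 : ∀ i, 0 ≤ p i) (hpmono : Antitone p) (hpsum : ∑' i, p i = 1)
    (X : ℕ → Ω → ℕ) (U V : ℕ → Ω → ℝ)
    (hmeas : ∀ t, Measurable fun ω => (X t ω, U t ω, V t ω))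
    (hindep : iIndepFun (fun t ω => (X t ω, U t ω, V t ω)) P)
    (hlaw : ∀ t, Measure.map (fun ω => (X t ω, U t ω, V t ω)) P
      = (itemLaw p).prod (unif01.prod unif01)) (s : ℕ)
    (κ : ((i : (Finset.range s : Finset ℕ)) → ℕ × ℝ × ℝ) → ℝ)
    (hκ : Measurable κ) (hκbd : ∀ f, |κ f| ≤ 1) :
    ∫ ω, κ (fun i => (X i ω, U i ω, V i ω)) *
      phiY p (ssRun m (fun r => X r ω) (fun r => U r ω) (fun r => V r ω) s, X s ω) ∂P
      = 0 := by
  classical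
  haveI : IsProbabilityMeasure (itemLaw p) := ⟨itemLaw_univ hp0 hpsum⟩
  set st : Ω → SSState m :=
    fun ω => ssRun m (fun r => X r ω) (fun r => U r ω) (fun r => V r ω) s with hst
  set A : Ω → ℝ × SSState m :=
    fun ω => (κ (fun i => (X i ω, U i ω, V i ω)), st ω) with hA
  have hAm : Measurable A := by
    refine Measurable.prodMk ?_ (measurable_stateOmega X U V hmeas s)
    exact hκ.comp (measurable_pi_lambda _ fun i => hmeas i)
  have hXm : Measurable (X s) := measurable_fst.comp (hmeas s)
  -- independence of A and X s
  have hdis : Disjoint (Finset.range s) ({s} : Finset ℕ) := by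
    simp [Finset.disjoint_singleton_right]
  have hI := hindep.indepFun_finset (Finset.range s) {s} hdis hmeas
  set FL : ((i : (Finset.range s : Finset ℕ)) → ℕ × ℝ × ℝ) → ℝ × SSState m :=
    fun f => (κ f, stateW m (fromTuple s f) s) with hFL
  have hFLm : Measurable FL :=
    hκ.prodMk ((measurable_stateW s).comp (measurable_fromTuple s))
  set FR : ((i : (({s} : Finset ℕ) : Finset ℕ)) → ℕ × ℝ × ℝ) → ℕ :=
    fun g => (g ⟨s, Finset.mem_singleton_self s⟩).1 with hFR
  have hFRm : Measurable FR := measurable_fst.comp (measurable_pi_apply _)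
  have hIc := hI.comp hFLm hFRm
  have hIc2 : IndepFun A (X s) P := by
    have h1 : (FL ∘ fun ω (i : (Finset.range s : Finset ℕ)) => (X i ω, U i ω, V i ω)) = A := by
      funext ω
      refine Prod.ext rfl ?_
      show stateW m (fromTuple s fun i : (Finset.range s : Finset ℕ) =>
        (X i ω, U i ω, V i ω)) s = stateW m (fun r => (X r ω, U r ω, V r ω)) s
      refine stateW_congr s fun r hr => ?_
      simp only [fromTuple, dif_pos hr]
    have h2 : (FR ∘ fun ω (i : (({s} : Finset ℕ) : Finset ℕ)) => (X i ω, U i ω, V i ω))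
        = X s := rfl
    rwa [h1, h2] at hIc
  have hmap : Measure.map (fun ω => (A ω, X s ω)) P = (Measure.map A P).prod (itemLaw p) := by
    rw [← map_X_eq P X U V hmeas hlaw s]
    exact (indepFun_iff_map_prod_eq_prod_map_map hAm.aemeasurable hXm.aemeasurable).1 hIc2
  set ψ : (ℝ × SSState m) × ℕ → ℝ :=
    fun q => max (-1) (min 1 q.1.1) * phiY p (q.1.2, q.2) with hψ
  have hψm : Measurable ψ := by
    refine Measurable.mul ?_ ?_
    · exact measurable_const.max (measurable_const.min (measurable_fst.fst))
    · exact (measurable_of_countable (fun q : SSState m × ℕ => phiY p q)).comp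
        ((measurable_fst.snd).prodMk measurable_snd)
  have hψbd : ∀ q, ‖ψ q‖ ≤ 1 := by
    intro q
    rw [hψ]
    have h1 : |max (-1) (min 1 q.1.1)| ≤ 1 :=
      abs_le.2 ⟨le_max_left _ _, max_le (by norm_num) (min_le_left _ _)⟩
    calc ‖max (-1) (min 1 q.1.1) * phiY p (q.1.2, q.2)‖
        = |max (-1) (min 1 q.1.1)| * |phiY p (q.1.2, q.2)| := abs_mul _ _
      _ ≤ 1 * 1 := mul_le_mul h1 (abs_phiY_le hp0 hpmono hpsum _) (abs_nonneg _) zero_le_one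
      _ = 1 := one_mul 1
  have hre : ∫ ω, κ (fun i => (X i ω, U i ω, V i ω)) * phiY p (st ω, X s ω) ∂P
      = ∫ ω, ψ (A ω, X s ω) ∂P := by
    refine integral_congr_ae (Filter.Eventually.of_forall fun ω => ?_)
    have hb := abs_le.1 (hκbd (fun i => (X i ω, U i ω, V i ω)))
    show _ = max (-1) (min 1 (κ _)) * phiY p (st ω, X s ω)
    rw [min_eq_right hb.2, max_eq_right hb.1]
  rw [hre]
  have hmv : ∫ ω, ψ (A ω, X s ω) ∂P
      = ∫ q, ψ q ∂(Measure.map (fun ω => (A ω, X s ω)) P) :=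
    (integral_map (hAm.prodMk hXm).aemeasurable hψm.aestronglyMeasurable).symm
  haveI : IsProbabilityMeasure (Measure.map A P) := Measure.isProbabilityMeasure_map hAm.aemeasurable
  have hint : Integrable ψ ((Measure.map A P).prod (itemLaw p)) :=
    (integrable_const (1:ℝ)).mono' hψm.aestronglyMeasurable (Filter.Eventually.of_forall hψbd)
  rw [hmv, hmap, MeasureTheory.integral_prod _ hint]
  have hin : ∀ a : ℝ × SSState m, ∫ i, ψ (a, i) ∂(itemLaw p) = 0 := by
    intro a
    rw [hψ]
    show ∫ i, max (-1) (min 1 a.1) * phiY p (a.2, i) ∂(itemLaw p) = 0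
    rw [MeasureTheory.integral_const_mul, integral_phiY hp0 hpmono hpsum, mul_zero]
  simp only [hin, integral_zero]

end Prob
section Main

variable {m : ℕ} {p : ℕ → ℝ} {Ω : Type*} [MeasurableSpace Ω]

/-- the centered increment `Y_r` -/
noncomputable def Yfun (p : ℕ → ℝ) (m : ℕ) (X : ℕ → Ω → ℕ) (U V : ℕ → Ω → ℝ)
    (r : ℕ) (ω : Ω) : ℝ :=
  phiY p (ssRun m (fun i => X i ω) (fun i => U i ω) (fun i => V i ω) r, X r ω)

/-- the martingale `M_t` -/
noncomputable def Mfun (p : ℕ → ℝ) (m : ℕ) (X : ℕ → Ω → ℕ) (U V : ℕ → Ω → ℝ)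
    (t : ℕ) (ω : Ω) : ℝ :=
  ∑ r ∈ Finset.range t, Yfun p m X U V r ω

open scoped Classical in
lemma nlCount_cast (p : ℕ → ℝ) (m : ℕ) (x : ℕ → ℕ) (u v : ℕ → ℝ) (t : ℕ) :
    (nlCount m x u v t : ℝ)
      = t - ∑ r ∈ Finset.range t,
          (phiY p (ssRun m x u v r, x r) + Gfun p (ssRun m x u v r)) := by
  have h1 : ∀ r, phiY p (ssRun m x u v r, x r) + Gfun p (ssRun m x u v r)
      = (if isLabel (ssRun m x u v r) (x r) then (1:ℝ) else 0) := by
    intro r; rw [phiY]; ring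
  calc (nlCount m x u v t : ℝ)
      = ∑ r ∈ Finset.range t,
          (1 - (if isLabel (ssRun m x u v r) (x r) then (1:ℝ) else 0)) := by
        rw [nlCount, Nat.cast_sum]
        refine Finset.sum_congr rfl fun r _ => ?_
        by_cases hc : isLabel (ssRun m x u v r) (x r) <;> simp [hc]
    _ = t - ∑ r ∈ Finset.range t, (if isLabel (ssRun m x u v r) (x r) then (1:ℝ) else 0) := by
        rw [Finset.sum_sub_distrib, Finset.sum_const, Finset.card_range, nsmul_eq_mul, mul_one]
    _ = _ := by rw [Finset.sum_congr rfl fun r _ => (h1 r).symm]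

lemma nlCount_eq (p : ℕ → ℝ) (m : ℕ) (X : ℕ → Ω → ℕ) (U V : ℕ → Ω → ℝ) (ω : Ω) (t : ℕ) :
    (nlCount m (fun r => X r ω) (fun r => U r ω) (fun r => V r ω) t : ℝ)
      = t - Mfun p m X U V t ω
          - ∑ r ∈ Finset.range t,
              Gfun p (ssRun m (fun i => X i ω) (fun i => U i ω) (fun i => V i ω) r) := by
  rw [nlCount_cast p, Finset.sum_add_distrib, Mfun]
  simp only [Yfun]
  ring

variable (P : Measure Ω) [IsProbabilityMeasure P]

lemma cross_zero
    (hp0 : ∀ i, 0 ≤ p i) (hpmono : Antitone p) (hpsum : ∑' i, p i = 1)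
    (X : ℕ → Ω → ℕ) (U V : ℕ → Ω → ℝ)
    (hmeas : ∀ t, Measurable fun ω => (X t ω, U t ω, V t ω))
    (hindep : iIndepFun (fun t ω => (X t ω, U t ω, V t ω)) P)
    (hlaw : ∀ t, Measure.map (fun ω => (X t ω, U t ω, V t ω)) P
      = (itemLaw p).prod (unif01.prod unif01))
    {r s : ℕ} (hrs : r < s) :
    ∫ ω, Yfun p m X U V r ω * Yfun p m X U V s ω ∂P = 0 := by
  classical
  set κ : ((i : (Finset.range s : Finset ℕ)) → ℕ × ℝ × ℝ) → ℝ :=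
    fun f => phiY p (stateW m (fromTuple s f) r, (fromTuple s f r).1) with hκdef
  have hκm : Measurable κ := by
    refine (measurable_of_countable (fun q : SSState m × ℕ => phiY p q)).comp ?_
    refine Measurable.prodMk ?_ ?_
    · exact (measurable_stateW r).comp (measurable_fromTuple s)
    · exact measurable_fst.comp ((measurable_pi_apply r).comp (measurable_fromTuple s))
  have h0 := exp_mul_phiY_eq_zero (m := m) P hp0 hpmono hpsum X U V hmeas hindep hlaw s κ hκm
    (fun f => abs_phiY_le hp0 hpmono hpsum _)
  rw [← h0]
  refine integral_congr_ae (Filter.Eventually.of_forall fun ω => ?_)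
  have h1 : stateW m
      (fromTuple s (fun i : (Finset.range s : Finset ℕ) => (X i ω, U i ω, V i ω))) r
      = stateW m (fun rr => (X rr ω, U rr ω, V rr ω)) r :=
    stateW_congr r (fun rr hrr => by simp only [fromTuple, dif_pos (hrr.trans hrs)])
  have h2 : ((fromTuple s (fun i : (Finset.range s : Finset ℕ) =>
      (X i ω, U i ω, V i ω))) r).1 = X r ω := by
    simp only [fromTuple, dif_pos hrs]
  show Yfun p m X U V r ω * Yfun p m X U V s ω
      = κ (fun i : (Finset.range s : Finset ℕ) => (X i ω, U i ω, V i ω)) *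
        phiY p (ssRun m (fun i => X i ω) (fun i => U i ω) (fun i => V i ω) s, X s ω)
  rw [hκdef]
  simp only [Yfun]
  rw [h1, h2]
  rfl

lemma Msq_le
    (hp0 : ∀ i, 0 ≤ p i) (hpmono : Antitone p) (hpsum : ∑' i, p i = 1)
    (X : ℕ → Ω → ℕ) (U V : ℕ → Ω → ℝ)
    (hmeas : ∀ t, Measurable fun ω => (X t ω, U t ω, V t ω))
    (hindep : iIndepFun (fun t ω => (X t ω, U t ω, V t ω)) P)
    (hlaw : ∀ t, Measure.map (fun ω => (X t ω, U t ω, V t ω)) P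
      = (itemLaw p).prod (unif01.prod unif01)) (t : ℕ) :
    ∫ ω, (Mfun p m X U V t ω)^2 ∂P ≤ t := by
  classical
  have hstm : ∀ r : ℕ, Measurable fun ω =>
      ssRun m (fun i => X i ω) (fun i => U i ω) (fun i => V i ω) r := fun r =>
    measurable_stateOmega X U V hmeas r
  have hXm : ∀ r, Measurable (X r) := fun r => measurable_fst.comp (hmeas r)
  have hYm : ∀ r, Measurable (Yfun p m X U V r) := fun r =>
    (measurable_of_countable (fun q : SSState m × ℕ => phiY p q)).comp
      ((hstm r).prodMk (hXm r))
  have hYbd : ∀ r ω, |Yfun p m X U V r ω| ≤ 1 := fun r ω =>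
    abs_phiY_le hp0 hpmono hpsum _
  have hYint : ∀ r s : ℕ, Integrable (fun ω => Yfun p m X U V r ω * Yfun p m X U V s ω) P := by
    intro r s
    refine (integrable_const (1:ℝ)).mono' ((hYm r).mul (hYm s)).aestronglyMeasurable
      (Filter.Eventually.of_forall fun ω => ?_)
    rw [Real.norm_eq_abs, abs_mul]
    exact mul_le_one₀ (hYbd r ω) (abs_nonneg _) (hYbd s ω)
  have hzero : ∀ r s : ℕ, r ≠ s →
      ∫ ω, Yfun p m X U V r ω * Yfun p m X U V s ω ∂P = 0 := by
    intro r s hrs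
    rcases lt_or_gt_of_ne hrs with h | h
    · exact cross_zero P hp0 hpmono hpsum X U V hmeas hindep hlaw h
    · have hc : (fun ω => Yfun p m X U V r ω * Yfun p m X U V s ω)
          = fun ω => Yfun p m X U V s ω * Yfun p m X U V r ω :=
        funext fun ω => mul_comm _ _
      rw [hc]
      exact cross_zero P hp0 hpmono hpsum X U V hmeas hindep hlaw h
  have hdiag : ∀ r : ℕ, ∫ ω, Yfun p m X U V r ω * Yfun p m X U V r ω ∂P ≤ 1 := by
    intro r
    calc ∫ ω, Yfun p m X U V r ω * Yfun p m X U V r ω ∂P ≤ ∫ _ω, (1:ℝ) ∂P := by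
          refine integral_mono (hYint r r) (integrable_const 1) fun ω => ?_
          have h := abs_le.1 (hYbd r ω)
          nlinarith [h.1, h.2]
      _ = 1 := by simp
  have hexp : ∀ ω, (Mfun p m X U V t ω)^2
      = ∑ r ∈ Finset.range t, ∑ s ∈ Finset.range t,
          Yfun p m X U V r ω * Yfun p m X U V s ω := by
    intro ω
    rw [Mfun, pow_two, Finset.sum_mul_sum]
  calc ∫ ω, (Mfun p m X U V t ω)^2 ∂P
      = ∫ ω, ∑ r ∈ Finset.range t, ∑ s ∈ Finset.range t,
          Yfun p m X U V r ω * Yfun p m X U V s ω ∂P :=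
        integral_congr_ae (Filter.Eventually.of_forall hexp)
    _ = ∑ r ∈ Finset.range t, ∫ ω, ∑ s ∈ Finset.range t,
          Yfun p m X U V r ω * Yfun p m X U V s ω ∂P :=
        integral_finset_sum _ (fun r _ => integrable_finset_sum _ (fun s _ => hYint r s))
    _ = ∑ r ∈ Finset.range t, ∑ s ∈ Finset.range t,
          ∫ ω, Yfun p m X U V r ω * Yfun p m X U V s ω ∂P :=
        Finset.sum_congr rfl fun r _ => integral_finset_sum _ (fun s _ => hYint r s)
    _ ≤ ∑ _r ∈ Finset.range t, (1:ℝ) := by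
        refine Finset.sum_le_sum fun r hr => ?_
        rw [Finset.sum_eq_single_of_mem r hr (fun s _ hs => hzero r s (Ne.symm hs))]
        exact hdiag r
    _ = t := by simp

end Main
section Arith

lemma final_arith (α' ε mR kR tR : ℝ) (hε : 0 < ε) (hk1 : 1 ≤ kR) (hm : 0 < mR)
    (hεk : 2*|α'| + |α'| + mR + 1 < ε * kR)
    (htlo : kR^2 ≤ tR) (hthi : tR < (kR+1)^2) :
    α' * tR < (α' + ε) * kR^2 - mR := by
  have hk0 : (0:ℝ) < kR := by linarith
  have hεk2 : (2*|α'| + |α'| + mR + 1) * kR < ε * kR^2 := by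
    calc (2*|α'| + |α'| + mR + 1) * kR < (ε * kR) * kR :=
          mul_lt_mul_of_pos_right hεk hk0
      _ = ε * kR^2 := by ring
  rcases le_or_gt 0 α' with hsign | hsign
  · rw [abs_of_nonneg hsign] at hεk2
    have h8 : α' * tR ≤ α' * (kR+1)^2 := mul_le_mul_of_nonneg_left hthi.le hsign
    nlinarith [mul_nonneg hsign (sub_nonneg.2 hk1), hεk2, h8, hk1]
  · rw [abs_of_neg hsign] at hεk2
    have h8 : α' * tR ≤ α' * kR^2 := by
      have := mul_le_mul_of_nonpos_left htlo (le_of_lt hsign)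
      linarith [this]
    nlinarith [hεk2, h8, hk1, mul_nonneg (neg_nonneg.2 hsign.le) (sub_nonneg.2 hk1)]

end Arith
/-- Lemma 6 of the paper, 0-indexed: the tail mass
`α = ∑_{j > m} p_j` over items outside the top `m` becomes
`α = ∑_{j ≥ m} p j`.  For any `α' < α`, almost surely
`N̂_min(t) > α' t / m` for all sufficiently large `t`. -/
theorem min_bin_count_lower_bound
    {Ω : Type*} [MeasurableSpace Ω] (P : Measure Ω) [IsProbabilityMeasure P]
    (m : ℕ) (hm : 0 < m)
    (p : ℕ → ℝ) (hp0 : ∀ i, 0 ≤ p i) (hpmono : Antitone p) (hpsum : ∑' i, p i = 1)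
    (X : ℕ → Ω → ℕ) (U V : ℕ → Ω → ℝ)
    (hmeas : ∀ t, Measurable fun ω => (X t ω, U t ω, V t ω))
    (hindep : iIndepFun (fun t ω => (X t ω, U t ω, V t ω)) P)
    (hlaw : ∀ t, Measure.map (fun ω => (X t ω, U t ω, V t ω)) P
      = (itemLaw p).prod (unif01.prod unif01))
    (α' : ℝ) (hα' : α' < ∑' j, if m ≤ j then p j else 0) :
    ∀ᵐ ω ∂P, ∃ T : ℕ, ∀ t, T ≤ t →
      α' * t / m
        < (minCount (ssRun m (fun r => X r ω) (fun r => U r ω)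
            (fun r => V r ω) t) : ℝ) := by
  classical
  set β : ℝ := ∑' j, if m ≤ j then p j else 0 with hβdef
  have hmR : (0:ℝ) < m := by exact_mod_cast hm
  have hG : ∀ c : SSState m, Gfun p c ≤ 1 - β := fun c => by
    have h := Gfun_le hp0 hpmono c
    rwa [range_sum_eq hp0 hpsum] at h
  set ε : ℝ := (β - α') / 2 with hεdef
  have hεpos : 0 < ε := by rw [hεdef]; linarith
  -- measurability of M
  have hstm : ∀ r : ℕ, Measurable fun ω =>
      ssRun m (fun i => X i ω) (fun i => U i ω) (fun i => V i ω) r := fun r =>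
    measurable_stateOmega X U V hmeas r
  have hXm : ∀ r, Measurable (X r) := fun r => measurable_fst.comp (hmeas r)
  have hYm : ∀ r, Measurable (Yfun p m X U V r) := fun r =>
    (measurable_of_countable (fun q : SSState m × ℕ => phiY p q)).comp
      ((hstm r).prodMk (hXm r))
  have hYbd : ∀ r ω, |Yfun p m X U V r ω| ≤ 1 := fun r ω =>
    abs_phiY_le hp0 hpmono hpsum _
  have hMm : ∀ t, Measurable (Mfun p m X U V t) := fun t =>
    Finset.measurable_sum _ (fun r _ => hYm r)
  have hMbd : ∀ t ω, |Mfun p m X U V t ω| ≤ t := by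
    intro t ω
    calc |Mfun p m X U V t ω| ≤ ∑ r ∈ Finset.range t, |Yfun p m X U V r ω| :=
          Finset.abs_sum_le_sum_abs _ _
      _ ≤ ∑ _r ∈ Finset.range t, 1 := Finset.sum_le_sum fun r _ => hYbd r ω
      _ = t := by simp
  have hMint2 : ∀ t : ℕ, Integrable (fun ω => (Mfun p m X U V t ω)^2) P := by
    intro t
    refine (integrable_const ((t:ℝ)^2)).mono' ((hMm t).pow_const 2).aestronglyMeasurable
      (Filter.Eventually.of_forall fun ω => ?_)
    rw [Real.norm_eq_abs, abs_pow, sq_abs, ← sq_abs]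
    exact pow_le_pow_left₀ (abs_nonneg _) (hMbd t ω) 2
  -- Chebyshev events
  set B : ℕ → Set Ω := fun k => {ω | ε * (k:ℝ)^2 ≤ |Mfun p m X U V (k*k) ω|} with hBdef
  have hcheb : ∀ k : ℕ, 1 ≤ k → P (B k) ≤ ENNReal.ofReal (1 / (ε^2 * (k:ℝ)^2)) := by
    intro k hk
    have hkR : (1:ℝ) ≤ (k:ℝ) := by exact_mod_cast hk
    have hsub : B k ⊆ {ω | ε^2 * (k:ℝ)^4 ≤ (Mfun p m X U V (k*k) ω)^2} := by
      intro ω hω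
      have h1 : ε * (k:ℝ)^2 ≤ |Mfun p m X U V (k*k) ω| := hω
      have h2 : (0:ℝ) ≤ ε * (k:ℝ)^2 := by positivity
      have h3 := mul_self_le_mul_self h2 h1
      rw [abs_mul_abs_self] at h3
      show ε^2 * (k:ℝ)^4 ≤ (Mfun p m X U V (k*k) ω)^2
      nlinarith [h3]
    have hmark := mul_meas_ge_le_integral_of_nonneg
      (Filter.Eventually.of_forall fun ω => sq_nonneg (Mfun p m X U V (k*k) ω))
      (hMint2 (k*k)) (ε^2 * (k:ℝ)^4)
    have hup : ∫ ω, (Mfun p m X U V (k*k) ω)^2 ∂P ≤ (k:ℝ)^2 := by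
      have h := Msq_le (m := m) P hp0 hpmono hpsum X U V hmeas hindep hlaw (k*k)
      calc ∫ ω, (Mfun p m X U V (k*k) ω)^2 ∂P ≤ ((k*k : ℕ) : ℝ) := h
        _ = (k:ℝ)^2 := by push_cast; ring
    have hle1 : (P (B k)).toReal ≤
        (P {ω | ε^2 * (k:ℝ)^4 ≤ (Mfun p m X U V (k*k) ω)^2}).toReal :=
      ENNReal.toReal_mono (measure_ne_top _ _) (measure_mono hsub)
    have hpos : (0:ℝ) < ε^2 * (k:ℝ)^4 := by positivity
    have key : (P (B k)).toReal ≤ 1 / (ε^2 * (k:ℝ)^2) := by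
      have h5 : ε^2 * (k:ℝ)^4 *
          (P {ω | ε^2 * (k:ℝ)^4 ≤ (Mfun p m X U V (k*k) ω)^2}).toReal ≤ (k:ℝ)^2 :=
        le_trans hmark hup
      have h6 : (P {ω | ε^2 * (k:ℝ)^4 ≤ (Mfun p m X U V (k*k) ω)^2}).toReal
          ≤ (k:ℝ)^2 / (ε^2 * (k:ℝ)^4) := by
        rw [le_div_iff₀ hpos]; linarith [h5]
      have h7 : (k:ℝ)^2 / (ε^2 * (k:ℝ)^4) = 1 / (ε^2 * (k:ℝ)^2) := by
        have hk0 : (k:ℝ) ≠ 0 := by positivity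
        field_simp
      linarith [hle1, h6, h7.le, h7.ge]
    calc P (B k) = ENNReal.ofReal (P (B k)).toReal :=
          (ENNReal.ofReal_toReal (measure_ne_top _ _)).symm
      _ ≤ ENNReal.ofReal (1 / (ε^2 * (k:ℝ)^2)) := ENNReal.ofReal_le_ofReal key
  have hsumP : (∑' k, P (B k)) ≠ ⊤ := by
    have hsum2 : Summable (fun k : ℕ => 1 / (ε^2 * ((k:ℝ)+1)^2)) := by
      have h1 : Summable (fun n : ℕ => 1 / ((n:ℝ))^2) :=
        Real.summable_one_div_nat_pow.2 one_lt_two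
      have h2 : Summable (fun k : ℕ => 1 / (((k+1 : ℕ)):ℝ)^2) :=
        (summable_nat_add_iff (f := fun n : ℕ => 1 / ((n:ℝ))^2) 1).2 h1
      have h3 : Summable (fun k : ℕ => 1 / (((k:ℝ)+1))^2) := by
        refine h2.congr fun k => ?_
        push_cast
        ring
      refine (h3.mul_left (1/ε^2)).congr fun k => ?_
      rw [div_mul_div_comm, one_mul]
    have hshift : ∑' k : ℕ, P (B (k+1))
        ≤ ∑' k : ℕ, ENNReal.ofReal (1 / (ε^2 * ((k:ℝ)+1)^2)) := by
      refine ENNReal.tsum_le_tsum fun k => ?_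
      have h := hcheb (k+1) (by omega)
      have hc : (((k+1 : ℕ)):ℝ) = (k:ℝ) + 1 := by push_cast; ring
      rwa [hc] at h
    have h0 : ∑' k, P (B k) = P (B 0) + ∑' k, P (B (k+1)) :=
      tsum_eq_zero_add' ENNReal.summable
    rw [h0]
    refine ENNReal.add_ne_top.2 ⟨measure_ne_top _ _, ?_⟩
    refine ne_top_of_le_ne_top ?_ hshift
    rw [← ENNReal.ofReal_tsum_of_nonneg (fun k => by positivity) hsum2]
    exact ENNReal.ofReal_ne_top
  have hae := MeasureTheory.ae_eventually_notMem (μ := P) hsumP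
  obtain ⟨K₂, hK₂⟩ := exists_nat_gt ((2*|α'| + |α'| + (m:ℝ) + 1) / ε)
  filter_upwards [hae] with ω hω
  obtain ⟨K₁, hK₁⟩ := Filter.eventually_atTop.1 hω
  refine ⟨(max (max K₁ K₂) 1) * (max (max K₁ K₂) 1), fun t ht => ?_⟩
  set K : ℕ := max (max K₁ K₂) 1 with hKdef
  set k : ℕ := Nat.sqrt t with hkdef
  have hkK : K ≤ k := Nat.le_sqrt.2 ht
  have hk1 : 1 ≤ k := le_trans (le_max_right _ 1) hkK
  have hkk_le : k * k ≤ t := Nat.sqrt_le t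
  have ht_lt : t < (k+1) * (k+1) := Nat.lt_succ_sqrt t
  -- M bound at k²
  have hMk : |Mfun p m X U V (k*k) ω| < ε * (k:ℝ)^2 := by
    have hnot : ω ∉ B k :=
      hK₁ k (le_trans (le_trans (le_max_left K₁ K₂) (le_max_left _ 1)) hkK)
    simp only [hBdef, Set.mem_setOf_eq, not_le] at hnot
    exact hnot
  -- nonlabel count lower bound at k²
  have hnl : (β - ε) * (k:ℝ)^2
      ≤ (nlCount m (fun r => X r ω) (fun r => U r ω) (fun r => V r ω) (k*k) : ℝ) := by
    rw [nlCount_eq p m X U V ω (k*k)]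
    have hGsum : ∑ r ∈ Finset.range (k*k),
        Gfun p (ssRun m (fun i => X i ω) (fun i => U i ω) (fun i => V i ω) r)
        ≤ (1 - β) * ((k:ℝ)^2) := by
      calc ∑ r ∈ Finset.range (k*k),
          Gfun p (ssRun m (fun i => X i ω) (fun i => U i ω) (fun i => V i ω) r)
          ≤ ∑ _r ∈ Finset.range (k*k), (1 - β) := Finset.sum_le_sum fun r _ => hG _
        _ = ((k*k : ℕ) : ℝ) * (1 - β) := by
            rw [Finset.sum_const, Finset.card_range, nsmul_eq_mul]
        _ = (1 - β) * ((k:ℝ)^2) := by push_cast; ring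
    have hMk' : Mfun p m X U V (k*k) ω < ε * (k:ℝ)^2 :=
      lt_of_le_of_lt (le_abs_self _) hMk
    have hcast : ((k*k : ℕ) : ℝ) = (k:ℝ)^2 := by push_cast; ring
    rw [hcast]
    linarith [hGsum, hMk']
  -- deterministic bound
  have hdet := nlCount_le hm (fun r => X r ω) (fun r => U r ω) (fun r => V r ω) t
  have hmono := nlCount_mono (m := m) (fun r => X r ω) (fun r => U r ω) (fun r => V r ω) hkk_le
  set c : ℕ := minCount (ssRun m (fun r => X r ω) (fun r => U r ω) (fun r => V r ω) t) with hcdef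
  have hchain : (β - ε) * (k:ℝ)^2 ≤ (m:ℝ) * ((c:ℝ) + 1) := by
    calc (β - ε) * (k:ℝ)^2
        ≤ (nlCount m (fun r => X r ω) (fun r => U r ω) (fun r => V r ω) (k*k) : ℝ) := hnl
      _ ≤ (nlCount m (fun r => X r ω) (fun r => U r ω) (fun r => V r ω) t : ℝ) := by
          exact_mod_cast hmono
      _ ≤ (m:ℝ) * ((c:ℝ) + 1) := by exact_mod_cast hdet
  -- numeric: ε k² > 2|α'| k + |α'| + m
  have hKk : ((2*|α'| + |α'| + (m:ℝ) + 1) / ε) < (k:ℝ) := by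
    have h1 : (K₂:ℝ) ≤ (k:ℝ) := by
      exact_mod_cast le_trans (le_trans (le_max_right K₁ K₂) (le_max_left _ 1)) hkK
    linarith [hK₂]
  have hkR1 : (1:ℝ) ≤ (k:ℝ) := by exact_mod_cast hk1
  have hεk : 2*|α'| + |α'| + (m:ℝ) + 1 < ε * (k:ℝ) := by
    rw [div_lt_iff₀ hεpos] at hKk
    linarith [hKk]
  have hnum : α' * (t:ℝ) < (β - ε) * (k:ℝ)^2 - (m:ℝ) := by
    have htlo : ((k:ℝ))^2 ≤ (t:ℝ) := by
      have h := hkk_le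
      have h' : ((k*k : ℕ) : ℝ) ≤ (t:ℝ) := by exact_mod_cast h
      calc ((k:ℝ))^2 = ((k*k : ℕ) : ℝ) := by push_cast; ring
        _ ≤ (t:ℝ) := h'
    have hthi : (t:ℝ) < ((k:ℝ)+1)^2 := by
      have h' : (t:ℝ) < (((k+1)*(k+1) : ℕ) : ℝ) := by exact_mod_cast ht_lt
      calc (t:ℝ) < (((k+1)*(k+1) : ℕ) : ℝ) := h'
        _ = ((k:ℝ)+1)^2 := by push_cast; ring
    have hβε : β - ε = α' + ε := by rw [hεdef]; ring
    rw [hβε]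
    exact final_arith α' ε (m:ℝ) (k:ℝ) (t:ℝ) hεpos hkR1 hmR hεk htlo hthi
  -- conclude
  show α' * (t:ℝ) / (m:ℝ) < (c:ℝ)
  rw [div_lt_iff₀ hmR]
  have : (m:ℝ) * ((c:ℝ) + 1) - (m:ℝ) = (c:ℝ) * (m:ℝ) := by ring
  linarith [hchain, hnum]
end
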